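/- arXiv:2201.02384 — 4 statements merged into one kernel-verified Lean document; each statement's English description precedes it below -/
import Mathlib

section
/- Lower bound on the nonlocal energy: let n ≥ 2, ε > 0, ρ > 0, η > 0, and let u : ℝⁿ → {0,1} be measurable with ∫_{ℝⁿ} u = 1 and supp u ⊂ ℝ × B′_ρ(0), where B′_ρ(0) is the ball of radius ρ in ℝ^{n−1}. Set A := 𝔸[u] and, for ξ₁ ∈ ℝ, D′_η(ξ₁) := { ξ′ ∈ ℝ^{n−1} : |ξ′| ≤ η |Â(ξ₁)|^{1/2} }. Then N_ε^(n)[u] ≥ (1 − ρ²η²) N_{ε,η,1}[u] + N_{ε,η,2}[u], where N_{ε,η,1}[u] := (γ_n(ε)/(2π)^{n−1}) ∫_{ℝⁿ} ξ₁²/(ε²ξ₁² + |ξ′|²) |Â(ξ₁)|² χ_{D′_η(ξ₁)}(ξ′) dξ and N_{ε,η,2}[u] := γ_n(ε) ∫_{ℝⁿ} ξ₁²/(ε²ξ₁² + |ξ′|²) |û(ξ) − (2π)^{−(n−1)/2} Â(ξ₁) χ_{D′_η(ξ₁)}(ξ′)|² dξ. -/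
open MeasureTheory Real Filter Topology ENNReal

noncomputable section

/-- ℝⁿ modelled as ℝ × ℝ^{n-1} with n = m+1: points x = (x₁, x′). -/
abbrev Spc (m : ℕ) := ℝ × EuclideanSpace ℝ (Fin m)

/-- Fourier transform on ℝⁿ (n = m+1) with the convention
    û(ξ) = (2π)^{-n/2} ∫ u(x) e^{-i x·ξ} dx. -/
def ft {m : ℕ} (u : Spc m → ℝ) (ξ : Spc m) : ℂ :=
  (((2 * π) ^ (-((m : ℝ) + 1) / 2) : ℝ) : ℂ) *
    ∫ x : Spc m, (u x : ℂ) * Complex.exp (-(Complex.I * ((x.1 * ξ.1 + @inner ℝ _ _ x.2 ξ.2 : ℝ) : ℂ)))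

/-- One-dimensional Fourier transform f̂(ξ₁) = (2π)^{-1/2} ∫ f(x₁) e^{-i x₁ ξ₁} dx₁. -/
def ft1 (f : ℝ → ℝ) (ξ : ℝ) : ℂ :=
  (((2 * π) ^ (-(1:ℝ)/2) : ℝ) : ℂ) * ∫ x : ℝ, (f x : ℂ) * Complex.exp (-(Complex.I * ((x * ξ : ℝ) : ℂ)))

/-- The prefactor γ_n(ε). -/
def gam (n : ℕ) (ε : ℝ) : ℝ := if n = 2 then ε else if n = 3 then 1 / (7 * |Real.log ε|) else 1

/-- The nonlocal energy N_ε^{(n)}[u], n = m+1, valued in [0,∞]. -/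
def Nen (m : ℕ) (ε : ℝ) (u : Spc m → ℝ) : ℝ≥0∞ :=
  ∫⁻ ξ : Spc m, ENNReal.ofReal (gam (m+1) ε * (ξ.1^2 / (ε^2 * ξ.1^2 + ‖ξ.2‖^2)) * ‖ft u ξ‖^2)

/-- Divergence of a vector field as the trace of its derivative. -/
def divg {m : ℕ} (φ : Spc m → Spc m) (x : Spc m) : ℝ :=
  LinearMap.trace ℝ (Spc m) (fderiv ℝ φ x : Spc m →ₗ[ℝ] Spc m)

/-- The anisotropic perimeter P_ε^{(n)}[u], as a supremum over C¹ compactly supported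
    vector fields φ with ε⁻²φ₁² + |φ′|² ≤ 1. -/
def Per (m : ℕ) (ε : ℝ) (u : Spc m → ℝ) : ℝ≥0∞ :=
  ⨆ (φ : Spc m → Spc m) (_ : ContDiff ℝ 1 φ ∧ HasCompactSupport φ ∧
      ∀ x, ε⁻¹ ^ 2 * (φ x).1 ^ 2 + ‖(φ x).2‖ ^ 2 ≤ 1),
    ENNReal.ofReal (∫ x : Spc m, u x * divg φ x)

/-- The rescaled energy E_ε^{(n)} = P_ε^{(n)} + N_ε^{(n)}. -/
def En (m : ℕ) (ε : ℝ) (u : Spc m → ℝ) : ℝ≥0∞ := Per m ε u + Nen m ε u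

/-- The admissible class 𝒜: measurable {0,1}-valued functions of unit mass and finite perimeter. -/
def Adm (m : ℕ) : Set (Spc m → ℝ) :=
  {u | Measurable u ∧ (∀ x, u x = 0 ∨ u x = 1) ∧ (∫ x : Spc m, u x) = 1 ∧ Per m 1 u < ⊤}

/-- The cross-sectional area 𝔸[u](x₁) = ∫ u(x₁, x′) dx′. -/
def crossA {m : ℕ} (u : Spc m → ℝ) (x₁ : ℝ) : ℝ := ∫ x' : EuclideanSpace ℝ (Fin m), u (x₁, x')

/-- Squared H^s(ℝ) norm, ‖f‖²_{H^s} = ∫ (1+ξ²)^s |f̂(ξ)|² dξ, valued in [0,∞]. -/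
def HsN (s : ℝ) (f : ℝ → ℝ) : ℝ≥0∞ :=
  ∫⁻ ξ : ℝ, ENNReal.ofReal ((1 + ξ^2) ^ s * ‖ft1 f ξ‖^2)

/-- Membership in H^s(ℝ): f ∈ L² with finite H^s norm. -/
def MemHs (s : ℝ) (f : ℝ → ℝ) : Prop := MemLp f 2 volume ∧ HsN s f < ⊤

/-- Indicator of the low-frequency cone D′_η(ξ₁) = {ξ′ : |ξ′| ≤ η |Â(ξ₁)|^{1/2}}. -/
def Dind (m : ℕ) (η : ℝ) (A : ℝ → ℝ) (ξ : Spc m) : ℝ :=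
  if ‖ξ.2‖ ≤ η * Real.sqrt ‖ft1 A ξ.1‖ then 1 else 0

/-- The part N_{ε,η,1}[u] of the nonlocal energy carried by the cross-section. -/
def N1 (m : ℕ) (ε η : ℝ) (u : Spc m → ℝ) : ℝ≥0∞ :=
  ∫⁻ ξ : Spc m, ENNReal.ofReal (gam (m+1) ε / (2*π)^m *
    (ξ.1^2 / (ε^2 * ξ.1^2 + ‖ξ.2‖^2)) *
    (‖ft1 (crossA u) ξ.1‖^2 * Dind m η (crossA u) ξ))

/-- The remainder part N_{ε,η,2}[u] of the nonlocal energy. -/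
def N2 (m : ℕ) (ε η : ℝ) (u : Spc m → ℝ) : ℝ≥0∞ :=
  ∫⁻ ξ : Spc m, ENNReal.ofReal (gam (m+1) ε *
    (ξ.1^2 / (ε^2 * ξ.1^2 + ‖ξ.2‖^2)) *
    ‖ft u ξ - (((2*π) ^ (-(m:ℝ)/2) : ℝ) : ℂ) * ft1 (crossA u) ξ.1 * (Dind m η (crossA u) ξ : ℂ)‖^2)


/-! ### Auxiliary lemmas for `statement11` -/

lemma st11_norm_exp_neg_I_mul (r : ℝ) : ‖Complex.exp (-(Complex.I * (r:ℂ)))‖ = 1 := by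
  have h : -(Complex.I * (r:ℂ)) = ((-r : ℝ) : ℂ) * Complex.I := by push_cast; ring
  rw [h, Complex.norm_exp_ofReal_mul_I]

lemma st11_alg (a a' c : ℂ) (t : ℝ) (h : ‖2*c - a - a'‖ * ‖c‖ ≤ t) :
    2*‖c‖^2 + ‖a - c‖^2 + ‖a' - c‖^2 ≤ ‖a‖^2 + ‖a'‖^2 + 2*t := by
  have h1 : ((2*c - a - a') * (starRingEnd ℂ) c).re ≤ t := by
    calc ((2*c - a - a') * (starRingEnd ℂ) c).re ≤ ‖(2*c - a - a') * (starRingEnd ℂ) c‖ :=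
          Complex.re_le_norm _
      _ = ‖2*c - a - a'‖ * ‖c‖ := by rw [norm_mul, Complex.norm_conj]
      _ ≤ t := h
  have e1 : ‖a - c‖^2 = Complex.normSq a + Complex.normSq c - 2*(a * (starRingEnd ℂ) c).re := by
    rw [← Complex.normSq_sub, ← Complex.sq_norm]
  have e2 : ‖a' - c‖^2 = Complex.normSq a' + Complex.normSq c - 2*(a' * (starRingEnd ℂ) c).re := by
    rw [← Complex.normSq_sub, ← Complex.sq_norm]
  have e3 : ‖a‖^2 = Complex.normSq a := by rw [← Complex.sq_norm]
  have e4 : ‖a'‖^2 = Complex.normSq a' := by rw [← Complex.sq_norm]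
  have e5 : ‖c‖^2 = Complex.normSq c := by rw [← Complex.sq_norm]
  have e6 : ((2*c - a - a') * (starRingEnd ℂ) c).re
      = 2*Complex.normSq c - (a * (starRingEnd ℂ) c).re - (a' * (starRingEnd ℂ) c).re := by
    simp [Complex.normSq_apply, Complex.mul_re, Complex.sub_re, Complex.sub_im]; ring
  rw [e1, e2, e3, e4, e5]
  rw [e6] at h1
  linarith

lemma st11_exp_combo (s t : ℝ) :
    2*Complex.exp (-(Complex.I*((s:ℝ):ℂ))) - Complex.exp (-(Complex.I*((s+t:ℝ):ℂ)))
      - Complex.exp (-(Complex.I*((s-t:ℝ):ℂ)))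
    = Complex.exp (-(Complex.I*((s:ℝ):ℂ))) * ((2 - 2*Real.cos t :ℝ):ℂ) := by
  have h1 : (-(Complex.I*((s+t:ℝ):ℂ))) = -(Complex.I*(s:ℂ)) + ((-t:ℝ):ℂ)*Complex.I := by
    push_cast; ring
  have h2 : (-(Complex.I*((s-t:ℝ):ℂ))) = -(Complex.I*(s:ℂ)) + ((t:ℝ):ℂ)*Complex.I := by
    push_cast; ring
  rw [h1, h2, Complex.exp_add, Complex.exp_add, Complex.exp_mul_I, Complex.exp_mul_I]
  simp [Complex.cos_neg, Complex.sin_neg, ← Complex.ofReal_cos]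
  push_cast
  ring

lemma st11_Tmp (m : ℕ) : MeasurePreserving (fun ξ : Spc m => (ξ.1, -ξ.2)) volume volume := by
  have h1 : MeasurePreserving (id : ℝ → ℝ) volume volume := MeasurePreserving.id _
  have h2 : MeasurePreserving (Neg.neg : EuclideanSpace ℝ (Fin m) → EuclideanSpace ℝ (Fin m))
      volume volume := Measure.measurePreserving_neg _
  have h3 := h1.prod h2
  rw [← Measure.volume_eq_prod] at h3
  exact h3

lemma st11_measA {m : ℕ} (u : Spc m → ℝ) (hu : Measurable u) : Measurable (crossA u) :=
  (hu.stronglyMeasurable.integral_prod_right').measurable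

lemma st11_measft {m : ℕ} (u : Spc m → ℝ) (hu : Measurable u) : Measurable (ft u) := by
  apply Measurable.const_mul
  have hk : StronglyMeasurable (fun p : Spc m × Spc m =>
      (u p.1 : ℂ) * Complex.exp (-(Complex.I * ((p.1.1 * p.2.1 + @inner ℝ _ _ p.1.2 p.2.2 : ℝ) : ℂ)))) := by
    apply Measurable.stronglyMeasurable
    apply Measurable.mul
    · exact Complex.measurable_ofReal.comp (hu.comp measurable_fst)
    · apply Complex.measurable_exp.comp
      apply Measurable.neg
      apply Measurable.const_mul
      apply Complex.measurable_ofReal.comp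
      exact ((measurable_fst.fst.mul measurable_snd.fst).add
        (measurable_fst.snd.inner measurable_snd.snd))
  exact hk.integral_prod_left'.measurable

lemma st11_measft1 (A : ℝ → ℝ) (hA : Measurable A) : Measurable (ft1 A) := by
  apply Measurable.const_mul
  have hk : StronglyMeasurable (fun p : ℝ × ℝ =>
      (A p.1 : ℂ) * Complex.exp (-(Complex.I * ((p.1 * p.2 : ℝ) : ℂ)))) := by
    apply Measurable.stronglyMeasurable
    exact (Complex.measurable_ofReal.comp (hA.comp measurable_fst)).mul
      (Complex.measurable_exp.comp ((Complex.measurable_ofReal.comp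
        (measurable_fst.mul measurable_snd)).const_mul _).neg)
  exact hk.integral_prod_left'.measurable

lemma st11_measD {m : ℕ} (η : ℝ) (A : ℝ → ℝ) (hA : Measurable A) : Measurable (Dind m η A) := by
  unfold Dind
  apply Measurable.ite _ measurable_const measurable_const
  exact measurableSet_le measurable_snd.norm
    (((st11_measft1 A hA).comp measurable_fst).norm.sqrt.const_mul η)

lemma st11_int_mul_bdd {α : Type*} [MeasureSpace α] {u : α → ℝ} (hu : Integrable u)
    (hum : Measurable u) (hnn : ∀ x, 0 ≤ u x)
    {g : α → ℂ} (hg : Measurable g) (hgb : ∀ x, ‖g x‖ ≤ 1) :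
    Integrable (fun x => (u x : ℂ) * g x) := by
  refine Integrable.mono' hu ((Complex.measurable_ofReal.comp hum).mul hg).aestronglyMeasurable
    (ae_of_all _ fun x => ?_)
  rw [norm_mul, Complex.norm_real, Real.norm_eq_abs, abs_of_nonneg (hnn x)]
  calc u x * ‖g x‖ ≤ u x * 1 := mul_le_mul_of_nonneg_left (hgb x) (hnn x)
    _ = u x := mul_one _

lemma st11_c_eq {m : ℕ} {u : Spc m → ℝ} (hum : Measurable u) (hu : Integrable u)
    (hnn : ∀ x, 0 ≤ u x) (ξ₁ : ℝ) :
    (((2*π) ^ (-(m:ℝ)/2) : ℝ) : ℂ) * ft1 (crossA u) ξ₁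
      = (((2 * π) ^ (-((m : ℝ) + 1) / 2) : ℝ) : ℂ) *
        ∫ x : Spc m, (u x : ℂ) * Complex.exp (-(Complex.I * ((x.1 * ξ₁ : ℝ) : ℂ))) := by
  have hgm : Measurable fun x : Spc m => Complex.exp (-(Complex.I * ((x.1 * ξ₁ : ℝ) : ℂ))) :=
    Complex.measurable_exp.comp ((Complex.measurable_ofReal.comp
      (measurable_fst.mul measurable_const)).const_mul _).neg
  have hint : Integrable fun x : Spc m =>
      (u x : ℂ) * Complex.exp (-(Complex.I * ((x.1 * ξ₁ : ℝ) : ℂ))) :=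
    st11_int_mul_bdd hu hum hnn hgm (fun x => le_of_eq (st11_norm_exp_neg_I_mul _))
  have hfub : (∫ x : Spc m, (u x : ℂ) * Complex.exp (-(Complex.I * ((x.1 * ξ₁ : ℝ) : ℂ))))
      = ∫ x₁ : ℝ, ∫ x' : EuclideanSpace ℝ (Fin m),
          (u (x₁, x') : ℂ) * Complex.exp (-(Complex.I * ((x₁ * ξ₁ : ℝ) : ℂ))) := by
    rw [Measure.volume_eq_prod, MeasureTheory.integral_prod]
    rw [← Measure.volume_eq_prod]; exact hint
  have hinner : ∀ x₁ : ℝ, (∫ x' : EuclideanSpace ℝ (Fin m),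
      (u (x₁, x') : ℂ) * Complex.exp (-(Complex.I * ((x₁ * ξ₁ : ℝ) : ℂ))))
      = (crossA u x₁ : ℂ) * Complex.exp (-(Complex.I * ((x₁ * ξ₁ : ℝ) : ℂ))) := by
    intro x₁
    rw [MeasureTheory.integral_mul_const, crossA]
    congr 1
    exact integral_ofReal (𝕜 := ℂ)
  have hexp : (2*π:ℝ) ^ (-(m:ℝ)/2) * (2*π) ^ (-(1:ℝ)/2) = (2*π) ^ (-((m:ℝ)+1)/2) := by
    rw [← Real.rpow_add (by positivity)]; ring_nf
  rw [hfub]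
  simp_rw [hinner]
  rw [ft1, ← mul_assoc, ← Complex.ofReal_mul, hexp]

lemma st11_key_bound {m : ℕ} {u : Spc m → ℝ} (hum : Measurable u) (hu : Integrable u)
    (h01 : ∀ x, u x = 0 ∨ u x = 1) (hmass : (∫ x : Spc m, u x) = 1)
    {ρ : ℝ} (hρ : 0 < ρ) (hsupp : Function.support u ⊆ {x : Spc m | ‖x.2‖ < ρ})
    (ξ₁ : ℝ) (ξ' : EuclideanSpace ℝ (Fin m)) :
    ‖2*((((2*π) ^ (-(m:ℝ)/2) : ℝ) : ℂ) * ft1 (crossA u) ξ₁)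
        - ft u (ξ₁, ξ') - ft u (ξ₁, -ξ')‖
      ≤ (2*π) ^ (-((m:ℝ)+1)/2) * (ρ^2 * ‖ξ'‖^2) := by
  have hnn : ∀ x, 0 ≤ u x := fun x => by rcases h01 x with h|h <;> simp [h]
  set C0 : ℝ := (2*π) ^ (-((m:ℝ)+1)/2) with hC0
  have hC0nn : 0 ≤ C0 := Real.rpow_nonneg (by positivity) _
  have hgm : ∀ c : EuclideanSpace ℝ (Fin m), Measurable fun x : Spc m =>
      Complex.exp (-(Complex.I * ((x.1 * ξ₁ + @inner ℝ _ _ x.2 c : ℝ) : ℂ))) := fun c =>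
    Complex.measurable_exp.comp ((Complex.measurable_ofReal.comp
      ((measurable_fst.mul measurable_const).add
        (measurable_snd.inner measurable_const))).const_mul _).neg
  have hgm0 : Measurable fun x : Spc m => Complex.exp (-(Complex.I * ((x.1 * ξ₁ : ℝ) : ℂ))) :=
    Complex.measurable_exp.comp ((Complex.measurable_ofReal.comp
      (measurable_fst.mul measurable_const)).const_mul _).neg
  have hint : ∀ c : EuclideanSpace ℝ (Fin m), Integrable fun x : Spc m =>
      (u x : ℂ) * Complex.exp (-(Complex.I * ((x.1 * ξ₁ + @inner ℝ _ _ x.2 c : ℝ) : ℂ))) :=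
    fun c => st11_int_mul_bdd hu hum hnn (hgm c) (fun x => le_of_eq (st11_norm_exp_neg_I_mul _))
  have hint0 : Integrable fun x : Spc m =>
      (u x : ℂ) * Complex.exp (-(Complex.I * ((x.1 * ξ₁ : ℝ) : ℂ))) :=
    st11_int_mul_bdd hu hum hnn hgm0 (fun x => le_of_eq (st11_norm_exp_neg_I_mul _))
  have hdiff : 2*((((2*π) ^ (-(m:ℝ)/2) : ℝ) : ℂ) * ft1 (crossA u) ξ₁)
        - ft u (ξ₁, ξ') - ft u (ξ₁, -ξ')
      = (C0 : ℂ) * ∫ x : Spc m, (u x : ℂ) *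
          (Complex.exp (-(Complex.I * ((x.1 * ξ₁ : ℝ) : ℂ))) *
            ((2 - 2*Real.cos (@inner ℝ _ _ x.2 ξ') : ℝ) : ℂ)) := by
    have hft : ∀ c : EuclideanSpace ℝ (Fin m), ft u (ξ₁, c)
        = (C0:ℂ) * ∫ x : Spc m, (u x:ℂ) *
            Complex.exp (-(Complex.I * ((x.1*ξ₁ + @inner ℝ _ _ x.2 c : ℝ):ℂ))) := fun c => rfl
    rw [st11_c_eq hum hu hnn ξ₁, hft ξ', hft (-ξ')]
    have hpt : (fun x : Spc m => (u x : ℂ) *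
          (Complex.exp (-(Complex.I * ((x.1 * ξ₁ : ℝ) : ℂ))) *
            ((2 - 2*Real.cos (@inner ℝ _ _ x.2 ξ') : ℝ) : ℂ)))
        = fun x : Spc m => 2 * ((u x : ℂ) * Complex.exp (-(Complex.I * ((x.1 * ξ₁ : ℝ) : ℂ))))
          - (u x : ℂ) * Complex.exp (-(Complex.I * ((x.1 * ξ₁ + @inner ℝ _ _ x.2 ξ' : ℝ) : ℂ)))
          - (u x : ℂ) * Complex.exp (-(Complex.I * ((x.1 * ξ₁ + @inner ℝ _ _ x.2 (-ξ') : ℝ) : ℂ))) := by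
      funext x
      have hni : @inner ℝ _ _ x.2 (-ξ') = -(@inner ℝ _ _ x.2 ξ' : ℝ) := inner_neg_right _ _
      rw [hni]
      have : (x.1 * ξ₁ + -(@inner ℝ _ _ x.2 ξ' : ℝ)) = x.1*ξ₁ - @inner ℝ _ _ x.2 ξ' := by ring
      rw [this]
      rw [← st11_exp_combo (x.1*ξ₁) (@inner ℝ _ _ x.2 ξ')]
      ring
    rw [hpt]
    have h1 : Integrable (fun x : Spc m =>
        2 * ((u x : ℂ) * Complex.exp (-(Complex.I * ((x.1 * ξ₁ : ℝ) : ℂ))))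
          - (u x : ℂ) * Complex.exp (-(Complex.I * ((x.1 * ξ₁ + @inner ℝ _ _ x.2 ξ' : ℝ) : ℂ)))) :=
      (hint0.const_mul 2).sub (hint ξ')
    rw [integral_sub h1 (hint (-ξ')), integral_sub (hint0.const_mul 2) (hint ξ'),
        integral_const_mul]
    ring
  rw [hdiff]
  rw [norm_mul, Complex.norm_real, Real.norm_eq_abs, abs_of_nonneg hC0nn]
  have hbound : ‖∫ x : Spc m, (u x : ℂ) *
          (Complex.exp (-(Complex.I * ((x.1 * ξ₁ : ℝ) : ℂ))) *
            ((2 - 2*Real.cos (@inner ℝ _ _ x.2 ξ') : ℝ) : ℂ))‖ ≤ ρ^2 * ‖ξ'‖^2 := by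
    refine le_trans (norm_integral_le_integral_norm _) ?_
    have hle : ∀ x : Spc m, ‖(u x : ℂ) *
          (Complex.exp (-(Complex.I * ((x.1 * ξ₁ : ℝ) : ℂ))) *
            ((2 - 2*Real.cos (@inner ℝ _ _ x.2 ξ') : ℝ) : ℂ))‖ ≤ u x * (ρ^2 * ‖ξ'‖^2) := by
      intro x
      have hcos := Real.cos_le_one (@inner ℝ _ _ x.2 ξ')
      rw [norm_mul, norm_mul, Complex.norm_real, Complex.norm_real, st11_norm_exp_neg_I_mul,
        Real.norm_eq_abs, Real.norm_eq_abs, abs_of_nonneg (hnn x), abs_of_nonneg (by linarith),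
        one_mul]
      rcases h01 x with h|h
      · simp [h]
      · have hx : x ∈ Function.support u := by simp [Function.support, h]
        have hxρ : ‖x.2‖ < ρ := hsupp hx
        have ht : |@inner ℝ _ _ x.2 ξ'| ≤ ρ * ‖ξ'‖ := by
          refine le_trans (abs_real_inner_le_norm _ _) ?_
          exact mul_le_mul_of_nonneg_right hxρ.le (norm_nonneg _)
        have ht2 : (@inner ℝ _ _ x.2 ξ' : ℝ)^2 ≤ ρ^2 * ‖ξ'‖^2 := by
          calc (@inner ℝ _ _ x.2 ξ' : ℝ)^2 = |@inner ℝ _ _ x.2 ξ'|^2 := (sq_abs _).symm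
            _ ≤ (ρ * ‖ξ'‖)^2 := by
                apply pow_le_pow_left₀ (abs_nonneg _) ht
            _ = ρ^2 * ‖ξ'‖^2 := by ring
        have hc2 : 2 - 2*Real.cos (@inner ℝ _ _ x.2 ξ') ≤ (@inner ℝ _ _ x.2 ξ' : ℝ)^2 := by
          have := Real.one_sub_sq_div_two_le_cos (x := (@inner ℝ _ _ x.2 ξ' : ℝ))
          linarith
        rw [h, one_mul, one_mul]
        linarith
    calc (∫ x : Spc m, ‖(u x : ℂ) *
          (Complex.exp (-(Complex.I * ((x.1 * ξ₁ : ℝ) : ℂ))) *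
            ((2 - 2*Real.cos (@inner ℝ _ _ x.2 ξ') : ℝ) : ℂ))‖)
        ≤ ∫ x : Spc m, u x * (ρ^2 * ‖ξ'‖^2) := by
          refine integral_mono_of_nonneg (ae_of_all _ fun x => norm_nonneg _)
            (hu.mul_const _) (ae_of_all _ hle)
      _ = ρ^2 * ‖ξ'‖^2 := by rw [integral_mul_const, hmass, one_mul]
  exact mul_le_mul_of_nonneg_left hbound hC0nn


/-- lower bound on the nonlocal energy,
    N_ε^{(n)}[u] ≥ (1 - ρ²η²) N_{ε,η,1}[u] + N_{ε,η,2}[u], stated in [0,∞] in the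
    rearranged (equivalent) form N_{ε,η,1} + N_{ε,η,2} ≤ N_ε + ρ²η²·N_{ε,η,1}. -/
theorem statement11 (m : ℕ) (hm : 1 ≤ m) (ε ρ η : ℝ) (hε : 0 < ε) (hρ : 0 < ρ) (hη : 0 < η)
    (u : Spc m → ℝ) (hmeas : Measurable u) (h01 : ∀ x, u x = 0 ∨ u x = 1)
    (hmass : (∫ x : Spc m, u x) = 1)
    (hsupp : Function.support u ⊆ {x : Spc m | ‖x.2‖ < ρ}) :
    N1 m ε η u + N2 m ε η u ≤ Nen m ε u + ENNReal.ofReal (ρ^2 * η^2) * N1 m ε η u := by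
  classical
  have hnn : ∀ x, 0 ≤ u x := fun x => by rcases h01 x with h|h <;> simp [h]
  have hu_int : Integrable u := by
    by_contra h
    rw [integral_undef h] at hmass
    norm_num at hmass
  -- notation
  set g : ℝ := gam (m+1) ε with hg
  have hgnn : 0 ≤ g := by
    rw [hg]; unfold gam; split_ifs <;> positivity
  set q : ℝ := (2*π) ^ (-(m:ℝ)/2) with hqdef
  have hqnn : 0 ≤ q := Real.rpow_nonneg (by positivity) _
  have h2pi : (1:ℝ) ≤ 2*π := by nlinarith [Real.pi_gt_three]
  have hC0q : (2*π:ℝ) ^ (-((m:ℝ)+1)/2) ≤ q := by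
    rw [hqdef]
    apply Real.rpow_le_rpow_of_exponent_le h2pi
    have : (0:ℝ) ≤ (m:ℝ) := Nat.cast_nonneg m
    linarith
  have hq2 : q^2 = ((2*π:ℝ)^m)⁻¹ := by
    rw [hqdef, sq, ← Real.rpow_add (by positivity), ← Real.rpow_natCast (2*π) m,
      ← Real.rpow_neg (by positivity)]
    congr 1
    ring
  -- real integrands
  set κ : ℝ := ρ^2*η^2 with hκ
  have hκnn : 0 ≤ κ := by positivity
  set W : Spc m → ℝ := fun ξ => ξ.1^2 / (ε^2 * ξ.1^2 + ‖ξ.2‖^2) with hW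
  have hWnn : ∀ ξ, 0 ≤ W ξ := fun ξ => by
    rw [hW]; positivity
  set f1 : Spc m → ℝ := fun ξ => gam (m+1) ε / (2*π)^m * (ξ.1^2 / (ε^2 * ξ.1^2 + ‖ξ.2‖^2)) *
    (‖ft1 (crossA u) ξ.1‖^2 * Dind m η (crossA u) ξ) with hf1
  set f2 : Spc m → ℝ := fun ξ => gam (m+1) ε * (ξ.1^2 / (ε^2 * ξ.1^2 + ‖ξ.2‖^2)) *
    ‖ft u ξ - (((2*π) ^ (-(m:ℝ)/2) : ℝ) : ℂ) * ft1 (crossA u) ξ.1 *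
      (Dind m η (crossA u) ξ : ℂ)‖^2 with hf2
  set f0 : Spc m → ℝ := fun ξ => gam (m+1) ε * (ξ.1^2 / (ε^2 * ξ.1^2 + ‖ξ.2‖^2)) * ‖ft u ξ‖^2
    with hf0
  have hN1 : N1 m ε η u = ∫⁻ ξ : Spc m, ENNReal.ofReal (f1 ξ) := rfl
  have hN2 : N2 m ε η u = ∫⁻ ξ : Spc m, ENNReal.ofReal (f2 ξ) := rfl
  have hNen : Nen m ε u = ∫⁻ ξ : Spc m, ENNReal.ofReal (f0 ξ) := rfl
  have hDval : ∀ ξ : Spc m, Dind m η (crossA u) ξ = 0 ∨ Dind m η (crossA u) ξ = 1 := by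
    intro ξ; unfold Dind; split_ifs <;> simp
  have hDnn : ∀ ξ : Spc m, 0 ≤ Dind m η (crossA u) ξ := fun ξ => by
    rcases hDval ξ with h|h <;> rw [h] <;> norm_num
  have hf1nn : ∀ ξ, 0 ≤ f1 ξ := by
    intro ξ
    rw [hf1]
    have := hDnn ξ
    positivity
  have hf2nn : ∀ ξ, 0 ≤ f2 ξ := by
    intro ξ; rw [hf2]; positivity
  have hf0nn : ∀ ξ, 0 ≤ f0 ξ := by
    intro ξ; rw [hf0]; positivity
  -- measurability
  have hmA : Measurable (crossA u) := st11_measA u hmeas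
  have hmft1 : Measurable (ft1 (crossA u)) := st11_measft1 _ hmA
  have hmftu : Measurable (ft u) := st11_measft u hmeas
  have hmD : Measurable (Dind m η (crossA u)) := st11_measD η _ hmA
  have hmWf : Measurable W := by
    rw [hW]
    exact (measurable_fst.pow_const 2).div
      (((measurable_fst.pow_const 2).const_mul _).add (measurable_snd.norm.pow_const 2))
  have hmf1 : Measurable f1 := by
    rw [hf1]
    exact (hmWf.const_mul _).mul ((((hmft1.comp measurable_fst).norm).pow_const 2).mul hmD)
  have hmf2 : Measurable f2 := by
    rw [hf2]
    exact (hmWf.const_mul _).mul ((hmftu.sub (((hmft1.comp measurable_fst).const_mul _).mul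
      (Complex.measurable_ofReal.comp hmD))).norm.pow_const 2)
  have hmf0 : Measurable f0 := by
    rw [hf0]
    exact (hmWf.const_mul _).mul (hmftu.norm.pow_const 2)
  -- pointwise symmetric inequality
  have key2 : ∀ (ξ₁ : ℝ) (ξ' : EuclideanSpace ℝ (Fin m)),
      f1 (ξ₁, ξ') + f2 (ξ₁, ξ') + (f1 (ξ₁, -ξ') + f2 (ξ₁, -ξ'))
        ≤ f0 (ξ₁, ξ') + κ * f1 (ξ₁, ξ') + (f0 (ξ₁, -ξ') + κ * f1 (ξ₁, -ξ')) := by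
    intro ξ₁ ξ'
    have hDneg : Dind m η (crossA u) (ξ₁, -ξ') = Dind m η (crossA u) (ξ₁, ξ') := by
      unfold Dind
      simp only [norm_neg]
    set B : ℝ := ‖ft1 (crossA u) ξ₁‖ with hB
    have hBnn : 0 ≤ B := norm_nonneg _
    have hWneg : W (ξ₁, -ξ') = W (ξ₁, ξ') := by
      rw [hW]; simp only [norm_neg]
    have hP : (0:ℝ) ≤ g * W (ξ₁, ξ') := mul_nonneg hgnn (hWnn _)
    have hf1eq : ∀ c : EuclideanSpace ℝ (Fin m), f1 (ξ₁, c)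
        = g / (2*π)^m * W (ξ₁, c) * (B^2 * Dind m η (crossA u) (ξ₁, c)) := fun c => rfl
    have hf2eq : ∀ c : EuclideanSpace ℝ (Fin m), f2 (ξ₁, c)
        = g * W (ξ₁, c) * ‖ft u (ξ₁, c) - (q : ℂ) * ft1 (crossA u) ξ₁ *
            (Dind m η (crossA u) (ξ₁, c) : ℂ)‖^2 := fun c => rfl
    have hf0eq : ∀ c : EuclideanSpace ℝ (Fin m), f0 (ξ₁, c)
        = g * W (ξ₁, c) * ‖ft u (ξ₁, c)‖^2 := fun c => rfl
    rcases hDval (ξ₁, ξ') with hD|hD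
    · -- indicator vanishes
      rw [hf1eq, hf2eq, hf1eq, hf2eq, hf0eq, hf0eq, hD, hDneg, hD, hWneg]
      simp only [Complex.ofReal_zero, mul_zero, zero_mul, sub_zero, add_zero, mul_one]
      nlinarith [hP, norm_nonneg (ft u (ξ₁, ξ')), norm_nonneg (ft u (ξ₁, -ξ')),
        sq_nonneg ‖ft u (ξ₁, ξ')‖, sq_nonneg ‖ft u (ξ₁, -ξ')‖, hκnn,
        mul_nonneg hκnn (mul_nonneg (mul_nonneg (div_nonneg hgnn (by positivity : (0:ℝ) ≤ (2*π)^m)) (hWnn (ξ₁, ξ'))) (mul_nonneg (sq_nonneg B) (le_of_eq hD.symm)))]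
    · -- indicator equals one
      have hcond : ‖ξ'‖ ≤ η * Real.sqrt B := by
        by_contra hcon
        have : Dind m η (crossA u) (ξ₁, ξ') = 0 := by
          unfold Dind; rw [if_neg]; exact hcon
        rw [this] at hD; norm_num at hD
      have hξ2 : ‖ξ'‖^2 ≤ η^2 * B := by
        calc ‖ξ'‖^2 ≤ (η * Real.sqrt B)^2 := by
              apply pow_le_pow_left₀ (norm_nonneg _) hcond
          _ = η^2 * (Real.sqrt B)^2 := by ring
          _ = η^2 * B := by rw [Real.sq_sqrt hBnn]
      set a : ℂ := ft u (ξ₁, ξ') with ha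
      set a' : ℂ := ft u (ξ₁, -ξ') with ha'
      set c : ℂ := (q : ℂ) * ft1 (crossA u) ξ₁ with hc
      have hnc : ‖c‖ = q * B := by
        rw [hc, norm_mul, Complex.norm_real, Real.norm_eq_abs, abs_of_nonneg hqnn, hB]
      have hkb := st11_key_bound hmeas hu_int h01 hmass hρ hsupp ξ₁ ξ'
      have ht : ‖2*c - a - a'‖ * ‖c‖ ≤ κ * (q^2 * B^2) := by
        rw [hnc]
        calc ‖2*c - a - a'‖ * (q * B)
            ≤ ((2*π) ^ (-((m:ℝ)+1)/2) * (ρ^2 * ‖ξ'‖^2)) * (q * B) := by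
              apply mul_le_mul_of_nonneg_right _ (mul_nonneg hqnn hBnn)
              exact hkb
          _ ≤ (q * (ρ^2 * (η^2 * B))) * (q * B) := by
              apply mul_le_mul_of_nonneg_right _ (mul_nonneg hqnn hBnn)
              have h1 : ρ^2 * ‖ξ'‖^2 ≤ ρ^2 * (η^2*B) := by
                apply mul_le_mul_of_nonneg_left hξ2 (by positivity)
              calc (2*π:ℝ) ^ (-((m:ℝ)+1)/2) * (ρ^2 * ‖ξ'‖^2)
                  ≤ q * (ρ^2 * ‖ξ'‖^2) := by
                    apply mul_le_mul_of_nonneg_right hC0q (by positivity)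
                _ ≤ q * (ρ^2 * (η^2*B)) := mul_le_mul_of_nonneg_left h1 hqnn
          _ = κ * (q^2 * B^2) := by rw [hκ]; ring
      have halg := st11_alg a a' c (κ * (q^2 * B^2)) ht
      have hcsq : ‖c‖^2 = q^2 * B^2 := by rw [hnc]; ring
      rw [hcsq] at halg
      have hmul := mul_le_mul_of_nonneg_left halg hP
      rw [hf1eq, hf2eq, hf1eq, hf2eq, hf0eq, hf0eq, hD, hDneg, hD, hWneg]
      simp only [Complex.ofReal_one, mul_one]
      have hgdiv : g / (2*π)^m * W (ξ₁, ξ') * B^2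
          = g * W (ξ₁, ξ') * (q^2 * B^2) := by
        rw [hq2]
        field_simp
      clear_value g q κ W B a a' c
      rw [hgdiv, ← ha, ← ha']
      set P : ℝ := g * W (ξ₁, ξ') with hPdef
      set s1 : ℝ := ‖a - c‖^2
      set s2 : ℝ := ‖a' - c‖^2
      set n1 : ℝ := ‖a‖^2
      set n2 : ℝ := ‖a'‖^2
      set Q : ℝ := q^2 * B^2
      ring_nf at hmul ⊢
      linarith [hmul]
  -- combine via the reflection
  have hTm : Measurable (fun ξ : Spc m => ((ξ.1, -ξ.2) : Spc m)) :=
    measurable_fst.prodMk measurable_snd.neg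
  have hTp := st11_Tmp m
  set F : Spc m → ℝ := fun ξ => f1 ξ + f2 ξ with hF
  set G : Spc m → ℝ := fun ξ => f0 ξ + κ * f1 ξ with hG
  have hFnn : ∀ ξ, 0 ≤ F ξ := fun ξ => add_nonneg (hf1nn ξ) (hf2nn ξ)
  have hGnn : ∀ ξ, 0 ≤ G ξ := fun ξ => add_nonneg (hf0nn ξ) (mul_nonneg hκnn (hf1nn ξ))
  have hmF : Measurable F := hmf1.add hmf2
  have hmG : Measurable G := hmf0.add (hmf1.const_mul κ)
  have hFG : ∀ ξ : Spc m, F ξ + F (ξ.1, -ξ.2) ≤ G ξ + G (ξ.1, -ξ.2) := by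
    intro ξ
    have h := key2 ξ.1 ξ.2
    rw [hF, hG]
    simp only [Prod.mk.eta] at h ⊢
    linarith [h]
  have hLHS : N1 m ε η u + N2 m ε η u = ∫⁻ ξ : Spc m, ENNReal.ofReal (F ξ) := by
    rw [hN1, hN2]
    have : ∀ ξ : Spc m, ENNReal.ofReal (F ξ)
        = ENNReal.ofReal (f1 ξ) + ENNReal.ofReal (f2 ξ) := fun ξ =>
      ENNReal.ofReal_add (hf1nn ξ) (hf2nn ξ)
    simp_rw [this]
    rw [lintegral_add_left (hmf1.ennreal_ofReal)]
  have hRHS : Nen m ε u + ENNReal.ofReal κ * N1 m ε η u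
      = ∫⁻ ξ : Spc m, ENNReal.ofReal (G ξ) := by
    rw [hNen, hN1]
    have : ∀ ξ : Spc m, ENNReal.ofReal (G ξ)
        = ENNReal.ofReal (f0 ξ) + ENNReal.ofReal κ * ENNReal.ofReal (f1 ξ) := by
      intro ξ
      rw [hG]
      rw [ENNReal.ofReal_add (hf0nn ξ) (mul_nonneg hκnn (hf1nn ξ)), ENNReal.ofReal_mul hκnn]
    simp_rw [this]
    rw [lintegral_add_left (hmf0.ennreal_ofReal),
      lintegral_const_mul _ (hmf1.ennreal_ofReal)]
  rw [hLHS, hRHS]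
  -- doubling trick
  have hcompF : (∫⁻ ξ : Spc m, ENNReal.ofReal (F ((ξ.1, -ξ.2) : Spc m)))
      = ∫⁻ ξ : Spc m, ENNReal.ofReal (F ξ) :=
    hTp.lintegral_comp (hmF.ennreal_ofReal)
  have hcompG : (∫⁻ ξ : Spc m, ENNReal.ofReal (G ((ξ.1, -ξ.2) : Spc m)))
      = ∫⁻ ξ : Spc m, ENNReal.ofReal (G ξ) :=
    hTp.lintegral_comp (hmG.ennreal_ofReal)
  have hdouble : (2:ℝ≥0∞) * ∫⁻ ξ : Spc m, ENNReal.ofReal (F ξ)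
      ≤ (2:ℝ≥0∞) * ∫⁻ ξ : Spc m, ENNReal.ofReal (G ξ) := by
    calc (2:ℝ≥0∞) * ∫⁻ ξ : Spc m, ENNReal.ofReal (F ξ)
        = (∫⁻ ξ : Spc m, ENNReal.ofReal (F ξ))
            + ∫⁻ ξ : Spc m, ENNReal.ofReal (F ((ξ.1, -ξ.2) : Spc m)) := by
          rw [hcompF, two_mul]
      _ = ∫⁻ ξ : Spc m, (ENNReal.ofReal (F ξ) + ENNReal.ofReal (F ((ξ.1, -ξ.2) : Spc m))) := by
          rw [lintegral_add_left (hmF.ennreal_ofReal)]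
      _ ≤ ∫⁻ ξ : Spc m, (ENNReal.ofReal (G ξ) + ENNReal.ofReal (G ((ξ.1, -ξ.2) : Spc m))) := by
          apply lintegral_mono
          intro ξ
          show ENNReal.ofReal (F ξ) + ENNReal.ofReal (F (ξ.1, -ξ.2))
              ≤ ENNReal.ofReal (G ξ) + ENNReal.ofReal (G (ξ.1, -ξ.2))
          rw [← ENNReal.ofReal_add (hFnn ξ) (hFnn _), ← ENNReal.ofReal_add (hGnn ξ) (hGnn _)]
          exact ENNReal.ofReal_le_ofReal (hFG ξ)
      _ = (∫⁻ ξ : Spc m, ENNReal.ofReal (G ξ))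
            + ∫⁻ ξ : Spc m, ENNReal.ofReal (G ((ξ.1, -ξ.2) : Spc m)) := by
          rw [lintegral_add_left (hmG.ennreal_ofReal)]
      _ = (2:ℝ≥0∞) * ∫⁻ ξ : Spc m, ENNReal.ofReal (G ξ) := by
          rw [hcompG, two_mul]
  exact (ENNReal.mul_le_mul_iff_right (by norm_num) (by norm_num)).mp hdouble
end
end

section
/- Low-frequency L^{5/2} bound in dimension 2: let ρ > 2, ε ∈ (0,1), η ∈ (0, 1/(2ρ)), and let u : ℝ² → {0,1} be measurable with ∫_{ℝ²} u = 1 and supp u ⊂ ℝ × (−ρ, ρ). Set A := 𝔸[u]. Then there is a constant C = C(η) such that ∫_{{ξ₁ ∈ ℝ : η |Â(ξ₁)|^{1/2} ≤ ε |ξ₁|}} |Â(ξ₁)|^{5/2} dξ₁ ≤ C · ε · N_ε^(2)[u]. -/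
set_option maxHeartbeats 1000000


open MeasureTheory Real Filter Topology ENNReal

noncomputable section

namespace St16
lemma norm_phase (r : ℝ) : ‖Complex.exp (-(Complex.I * (r : ℂ)))‖ = 1 := by
  rw [Complex.norm_exp]; simp

lemma meas_phase {α : Type*} [MeasurableSpace α] {r : α → ℝ} (hr : Measurable r) :
    Measurable fun x => Complex.exp (-(Complex.I * (r x : ℂ))) :=
  Complex.measurable_exp.comp ((Complex.measurable_ofReal.comp hr).const_mul Complex.I).neg

lemma integrable_phase {α : Type*} [MeasureSpace α] {u : α → ℝ} (hu : Integrable u)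
    {r : α → ℝ} (hr : Measurable r) :
    Integrable fun x => (u x : ℂ) * Complex.exp (-(Complex.I * (r x : ℂ))) := by
  have h := (hu.ofReal (𝕜 := ℂ)).bdd_mul
    (f := fun x => Complex.exp (-(Complex.I * (r x : ℂ))))
    (c := 1) ((meas_phase hr).aestronglyMeasurable) (Filter.Eventually.of_forall fun x => le_of_eq (norm_phase _))
  simpa [mul_comm] using h

lemma coord_measurable : Measurable fun y : EuclideanSpace ℝ (Fin 1) => y 0 :=
  (EuclideanSpace.proj (0 : Fin 1) (𝕜 := ℝ)).continuous.measurable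

lemma eucl_norm (y : EuclideanSpace ℝ (Fin 1)) : ‖y‖ = |y 0| := by
  rw [EuclideanSpace.norm_eq]; simp [Real.sqrt_sq_eq_abs]

lemma eucl_inner (v y : EuclideanSpace ℝ (Fin 1)) : (inner ℝ v y : ℝ) = v 0 * y 0 := by
  simp [PiLp.inner_apply, RCLike.inner_apply, Fin.sum_univ_one]; ring

/-- the partial Fourier transform in x₁ direction, full transform in x₂, unnormalized. -/
def Fst (u : Spc 1 → ℝ) (t s : ℝ) : ℂ :=
  ∫ x : Spc 1, (u x : ℂ) * Complex.exp (-(Complex.I * ((x.1 * t + x.2 0 * s : ℝ) : ℂ)))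

variable {u : Spc 1 → ℝ}

lemma kernel_meas (hu : Measurable u) (t : ℝ) :
    Measurable (fun p : ℝ × Spc 1 =>
      (u p.2 : ℂ) * Complex.exp (-(Complex.I * ((p.2.1 * t + p.2.2 0 * p.1 : ℝ) : ℂ)))) := by
  refine (Complex.measurable_ofReal.comp (hu.comp measurable_snd)).mul (meas_phase ?_)
  exact ((measurable_snd.fst.mul_const t).add
    ((coord_measurable.comp measurable_snd.snd).mul measurable_fst))

lemma Fst_meas (hu : Measurable u) (t : ℝ) : StronglyMeasurable (Fst u t) := by
  have := ((kernel_meas hu t).stronglyMeasurable).integral_prod_right'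
    (ν := (volume : Measure (Spc 1)))
  exact this

lemma Fst_norm_le (hu0 : ∀ x, 0 ≤ u x) (hint : Integrable u)
    (hmass : (∫ x : Spc 1, u x) = 1) (t s : ℝ) : ‖Fst u t s‖ ≤ 1 := by
  refine le_trans (norm_integral_le_integral_norm _) ?_
  have : ∀ x : Spc 1, ‖(u x : ℂ) * Complex.exp (-(Complex.I *
      ((x.1 * t + x.2 0 * s : ℝ) : ℂ)))‖ = u x := by
    intro x
    rw [norm_mul, norm_phase, Complex.norm_real, Real.norm_eq_abs, abs_of_nonneg (hu0 x), mul_one]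
  rw [integral_congr_ae (Filter.Eventually.of_forall this), hmass]

lemma ft1_eq (hu : Measurable u) (hint : Integrable u) (t : ℝ) :
    ft1 (crossA u) t = (((2 * π) ^ (-(1:ℝ)/2) : ℝ) : ℂ) * Fst u t 0 := by
  unfold ft1 Fst
  congr 1
  have hF0 : (∫ x : Spc 1, (u x : ℂ) * Complex.exp (-(Complex.I * ((x.1 * t + x.2 0 * 0 : ℝ) : ℂ))))
      = ∫ x : Spc 1, (u x : ℂ) * Complex.exp (-(Complex.I * ((x.1 * t : ℝ) : ℂ))) := by
    congr 1; funext x; norm_num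
  rw [hF0]
  have hi : Integrable (fun x : Spc 1 => (u x : ℂ) * Complex.exp (-(Complex.I * ((x.1 * t : ℝ) : ℂ))))
      (volume.prod volume) := by
    have := integrable_phase (u := u) hint (r := fun x : Spc 1 => x.1 * t)
      (measurable_fst.mul_const t)
    rwa [← Measure.volume_eq_prod]
  have h2 : (∫ x : Spc 1, (u x : ℂ) * Complex.exp (-(Complex.I * ((x.1 * t : ℝ) : ℂ))))
      = ∫ x₁ : ℝ, ∫ x₂ : EuclideanSpace ℝ (Fin 1),
          (u (x₁, x₂) : ℂ) * Complex.exp (-(Complex.I * ((x₁ * t : ℝ) : ℂ))) := by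
    rw [Measure.volume_eq_prod, MeasureTheory.integral_prod _ hi]
  rw [h2]
  congr 1; funext x₁
  rw [integral_mul_const]
  congr 1
  rw [crossA]
  exact (integral_ofReal (𝕜 := ℂ)).symm

lemma ft_eq (t : ℝ) (y : EuclideanSpace ℝ (Fin 1)) :
    ft u (t, y) = (((2 * π)⁻¹ : ℝ) : ℂ) * Fst u t (y 0) := by
  unfold ft Fst
  have h1 : (-(((1:ℕ) : ℝ) + 1) / 2) = (-1 : ℝ) := by norm_num
  rw [h1, Real.rpow_neg_one]
  congr 1
  congr 1; funext x
  congr 3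
  rw [eucl_inner]

lemma a_meas (hu : Measurable u) (hint : Integrable u) :
    Measurable fun t : ℝ => ‖ft1 (crossA u) t‖ := by
  have h : ∀ t, ft1 (crossA u) t = (((2 * π) ^ (-(1:ℝ)/2) : ℝ) : ℂ) * Fst u t 0 :=
    fun t => ft1_eq hu hint t
  simp_rw [h]
  refine Measurable.norm (Measurable.const_mul ?_ _)
  have hker : Measurable (fun p : ℝ × Spc 1 =>
      (u p.2 : ℂ) * Complex.exp (-(Complex.I * ((p.2.1 * p.1 + p.2.2 0 * 0 : ℝ) : ℂ)))) := by
    refine (Complex.measurable_ofReal.comp (hu.comp measurable_snd)).mul (meas_phase ?_)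
    exact (measurable_snd.fst.mul measurable_fst).add
      ((coord_measurable.comp measurable_snd.snd).mul measurable_const)
  exact (hker.stronglyMeasurable.integral_prod_right' (ν := (volume : Measure (Spc 1)))).measurable

lemma ft_meas (hu : Measurable u) : Measurable (ft u (m := 1)) := by
  unfold ft
  refine Measurable.const_mul ?_ _
  have hker : Measurable (fun p : Spc 1 × Spc 1 =>
      (u p.2 : ℂ) * Complex.exp (-(Complex.I *
        ((p.2.1 * p.1.1 + @inner ℝ _ _ p.2.2 p.1.2 : ℝ) : ℂ)))) := by
    refine (Complex.measurable_ofReal.comp (hu.comp measurable_snd)).mul (meas_phase ?_)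
    have hinner : Continuous (fun p : Spc 1 × Spc 1 => (@inner ℝ _ _ p.2.2 p.1.2 : ℝ)) :=
      continuous_inner.comp ((continuous_snd.snd).prodMk (continuous_fst.snd))
    exact (measurable_snd.fst.mul measurable_fst.fst).add hinner.measurable
  exact (hker.stronglyMeasurable.integral_prod_right' (ν := (volume : Measure (Spc 1)))).measurable

lemma kernel_est (T y : ℝ) (hT : 0 ≤ T) :
    ‖(∫ s in Set.Icc (-T) T, Complex.exp (-(Complex.I * ((y * s : ℝ) : ℂ)))) - ((2*T : ℝ) : ℂ)‖
      ≤ y^2 * T^3 := by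
  have hle : (-T) ≤ T := by linarith
  have hIcc : (∫ s in Set.Icc (-T) T, Complex.exp (-(Complex.I * ((y * s : ℝ) : ℂ))))
      = ∫ s in (-T)..T, Complex.exp (-(Complex.I * ((y * s : ℝ) : ℂ))) := by
    rw [intervalIntegral.integral_of_le hle, MeasureTheory.integral_Icc_eq_integral_Ioc]
  have hexp : ∀ s : ℝ, Complex.exp (-(Complex.I * ((y * s : ℝ) : ℂ)))
      = ((Real.cos (y*s) : ℝ) : ℂ) - ((Real.sin (y*s) : ℝ) : ℂ) * Complex.I := by
    intro s
    have h1 : -(Complex.I * ((y * s : ℝ) : ℂ)) = ((-(y*s) : ℝ) : ℂ) * Complex.I := by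
      push_cast; ring
    rw [h1, Complex.exp_mul_I, ← Complex.ofReal_cos, ← Complex.ofReal_sin,
      Real.cos_neg, Real.sin_neg]
    push_cast; ring
  have hcont1 : IntervalIntegrable (fun s => ((Real.cos (y*s) : ℝ) : ℂ)) volume (-T) T :=
    (Complex.continuous_ofReal.comp (Real.continuous_cos.comp
      (continuous_const.mul continuous_id))).intervalIntegrable _ _
  have hcont2 : IntervalIntegrable (fun s => ((Real.sin (y*s) : ℝ) : ℂ) * Complex.I) volume (-T) T :=
    ((Complex.continuous_ofReal.comp (Real.continuous_sin.comp
      (continuous_const.mul continuous_id))).mul continuous_const).intervalIntegrable _ _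
  have hsin : (∫ s in (-T)..T, Real.sin (y*s)) = 0 := by
    rcases eq_or_ne y 0 with hy | hy
    · simp [hy]
    · rw [intervalIntegral.integral_comp_mul_left (fun z => Real.sin z) hy]
      simp [integral_sin, mul_neg, Real.cos_neg]
  have hcos : |(∫ s in (-T)..T, Real.cos (y*s)) - 2*T| ≤ y^2 * T^3 := by
    have h2T : (2:ℝ)*T = ∫ s in (-T)..T, (1:ℝ) := by simp; ring
    have hcc : IntervalIntegrable (fun s => Real.cos (y*s)) volume (-T) T :=
      (Real.continuous_cos.comp (continuous_const.mul continuous_id)).intervalIntegrable _ _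
    rw [h2T, ← intervalIntegral.integral_sub hcc intervalIntegrable_const]
    have hbd : ∀ s ∈ Set.uIoc (-T) T, ‖Real.cos (y*s) - 1‖ ≤ y^2*T^2/2 := by
      intro s hs
      rw [Set.uIoc_of_le hle] at hs
      have hs1 : -T ≤ s := le_of_lt hs.1
      have hs2 : s ≤ T := hs.2
      have hq := Real.one_sub_sq_div_two_le_cos (x := y*s)
      have hc1 := Real.cos_le_one (y*s)
      have hsq : (y*s)^2 ≤ y^2*T^2 := by
        have h1 : s^2 ≤ T^2 := by nlinarith
        calc (y*s)^2 = y^2 * s^2 := by ring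
          _ ≤ y^2*T^2 := by nlinarith [sq_nonneg y]
      rw [Real.norm_eq_abs, abs_le]
      constructor <;> nlinarith
    have hh := intervalIntegral.norm_integral_le_of_norm_le_const hbd
    rw [Real.norm_eq_abs] at hh
    refine le_trans hh ?_
    rw [abs_of_nonneg (by linarith : (0:ℝ) ≤ T - -T)]
    nlinarith [sq_nonneg y]
  rw [hIcc, intervalIntegral.integral_congr (fun s _ => hexp s),
    intervalIntegral.integral_sub hcont1 hcont2, intervalIntegral.integral_ofReal,
    intervalIntegral.integral_mul_const, intervalIntegral.integral_ofReal, hsin]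
  have : ((∫ s in (-T)..T, Real.cos (y*s) : ℝ) : ℂ) - ((0:ℝ):ℂ) * Complex.I - ((2*T:ℝ):ℂ)
      = (((∫ s in (-T)..T, Real.cos (y*s)) - 2*T : ℝ) : ℂ) := by push_cast; ring
  rw [this, Complex.norm_real, Real.norm_eq_abs]
  exact hcos

lemma slice_sq_lb (hu : Measurable u) (hu0 : ∀ x, 0 ≤ u x)
    (hint : Integrable u) (hmass : (∫ x : Spc 1, u x) = 1)
    {ρ : ℝ} (hρ : 0 < ρ) (hsupp : Function.support u ⊆ {x : Spc 1 | ‖x.2‖ < ρ})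
    (t T : ℝ) (hT : 0 < T)
    (hTa : T^2 * ρ^2 ≤ ‖ft1 (crossA u) t‖ / 4) :
    8 * T * ‖ft1 (crossA u) t‖^2 ≤ ∫ s in Set.Icc (-T) T, ‖Fst u t s‖^2 := by
  set a : ℝ := ‖ft1 (crossA u) t‖ with ha
  have ha0 : 0 ≤ a := norm_nonneg _
  have hapos : 0 < a := by nlinarith [sq_nonneg T, sq_nonneg ρ, mul_pos (mul_pos hT hT) (mul_pos hρ hρ)]
  have h2π : (0:ℝ) < 2*π := by positivity
  have hF0 : ‖Fst u t 0‖ = Real.sqrt (2*π) * a := by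
    have h1 := ft1_eq hu hint t
    have h2 : ((2 * π) ^ (-(1:ℝ)/2) : ℝ) = (Real.sqrt (2*π))⁻¹ := by
      rw [Real.sqrt_eq_rpow, ← Real.rpow_neg h2π.le]
      norm_num
    have hs : (0:ℝ) < Real.sqrt (2*π) := Real.sqrt_pos.mpr h2π
    have h3 : a = (Real.sqrt (2*π))⁻¹ * ‖Fst u t 0‖ := by
      rw [ha, h1, norm_mul, Complex.norm_real, h2, Real.norm_eq_abs,
        abs_of_nonneg (by positivity)]
    rw [h3]
    field_simp
  set c : Spc 1 → ℂ := fun x => (u x : ℂ) * Complex.exp (-(Complex.I * ((x.1 * t : ℝ) : ℂ))) with hc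
  set K : ℝ → ℂ := fun y => ∫ s in Set.Icc (-T) T,
    Complex.exp (-(Complex.I * ((y * s : ℝ) : ℂ))) with hK
  have hcint : Integrable c := integrable_phase hint (measurable_fst.mul_const t)
  have hKmeas : Measurable K := by
    have hker : Measurable (fun p : ℝ × ℝ => Complex.exp (-(Complex.I * ((p.1 * p.2 : ℝ) : ℂ)))) :=
      meas_phase (measurable_fst.mul measurable_snd)
    exact (hker.stronglyMeasurable.integral_prod_right'
      (ν := volume.restrict (Set.Icc (-T) T))).measurable
  have hKbd : ∀ y, ‖K y‖ ≤ 2*T := by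
    intro y
    refine le_trans (norm_integral_le_integral_norm _) ?_
    have hph : ∀ s : ℝ, ‖Complex.exp (-(Complex.I * ((y * s : ℝ) : ℂ)))‖ = (1:ℝ) :=
      fun s => norm_phase _
    rw [integral_congr_ae (Filter.Eventually.of_forall hph), setIntegral_const, smul_eq_mul,
      mul_one, Real.volume_real_Icc, max_eq_left (by linarith : (0:ℝ) ≤ T - -T)]
    linarith
  have hker2 := kernel_meas hu t
  have hprodint : Integrable (fun p : ℝ × Spc 1 =>
      (u p.2 : ℂ) * Complex.exp (-(Complex.I * ((p.2.1 * t + p.2.2 0 * p.1 : ℝ) : ℂ))))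
      ((volume.restrict (Set.Icc (-T) T)).prod volume) := by
    have h1 : Integrable (fun _ : ℝ => (1:ℝ)) (volume.restrict (Set.Icc (-T) T)) :=
      integrableOn_const measure_Icc_lt_top.ne
    have hb := h1.mul_prod hint
    refine hb.mono' hker2.aestronglyMeasurable ?_
    refine Filter.Eventually.of_forall (fun p => ?_)
    rw [norm_mul, norm_phase, Complex.norm_real, Real.norm_eq_abs, abs_of_nonneg (hu0 p.2), mul_one]
    simp
  have hswap : (∫ s in Set.Icc (-T) T, Fst u t s) = ∫ x : Spc 1, c x * K (x.2 0) := by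
    have h := MeasureTheory.integral_integral_swap (f := fun (s : ℝ) (x : Spc 1) =>
      (u x : ℂ) * Complex.exp (-(Complex.I * ((x.1 * t + x.2 0 * s : ℝ) : ℂ)))) hprodint
    have h2 : (∫ x : Spc 1, ∫ s in Set.Icc (-T) T,
        (u x : ℂ) * Complex.exp (-(Complex.I * ((x.1 * t + x.2 0 * s : ℝ) : ℂ))))
        = ∫ x : Spc 1, c x * K (x.2 0) := by
      congr 1; funext x
      have hpt : ∀ s : ℝ, (u x : ℂ) * Complex.exp (-(Complex.I * ((x.1 * t + x.2 0 * s : ℝ) : ℂ)))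
          = c x * Complex.exp (-(Complex.I * ((x.2 0 * s : ℝ) : ℂ))) := by
        intro s
        rw [hc, mul_assoc, ← Complex.exp_add]
        congr 2
        push_cast
        ring
      rw [integral_congr_ae (Filter.Eventually.of_forall hpt), integral_const_mul]
    exact h.trans h2
  have hcKint : Integrable (fun x : Spc 1 => c x * K (x.2 0)) := by
    have h := hcint.bdd_mul
      ((hKmeas.comp (coord_measurable.comp measurable_snd)).aestronglyMeasurable)
      (Filter.Eventually.of_forall fun x => hKbd _)
    simpa [mul_comm] using h
  have h2TF0 : ((2*T : ℝ) : ℂ) * Fst u t 0 = ∫ x : Spc 1, ((2*T:ℝ):ℂ) * c x := by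
    rw [integral_const_mul]
    congr 1
    unfold Fst
    congr 1; funext x
    rw [hc]
    norm_num
  have hcxnorm : ∀ x : Spc 1, ‖c x‖ = u x := by
    intro x
    rw [hc]
    rw [norm_mul, norm_phase, Complex.norm_real, Real.norm_eq_abs, abs_of_nonneg (hu0 x), mul_one]
  have hsub : ∀ x : Spc 1, c x * K (x.2 0) - ((2*T:ℝ):ℂ) * c x
      = c x * (K (x.2 0) - ((2*T:ℝ):ℂ)) := by intro x; ring
  have hsubint : Integrable (fun x : Spc 1 => c x * (K (x.2 0) - ((2*T:ℝ):ℂ))) :=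
    (hcKint.sub (hcint.const_mul _)).congr (Filter.Eventually.of_forall hsub)
  have hdiff : ‖(∫ s in Set.Icc (-T) T, Fst u t s) - ((2*T:ℝ):ℂ) * Fst u t 0‖ ≤ ρ^2 * T^3 := by
    rw [hswap, h2TF0, ← integral_sub hcKint (hcint.const_mul _),
      integral_congr_ae (Filter.Eventually.of_forall hsub)]
    refine le_trans (norm_integral_le_integral_norm _) ?_
    have hptb : ∀ x : Spc 1, ‖c x * (K (x.2 0) - ((2*T:ℝ):ℂ))‖ ≤ u x * (ρ^2 * T^3) := by
      intro x
      rw [norm_mul, hcxnorm]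
      rcases eq_or_ne (u x) 0 with h0 | h0
      · simp [h0]
      · have hx2 : |x.2 0| ≤ ρ := by
          have hxx := hsupp h0
          rw [Set.mem_setOf_eq, eucl_norm] at hxx
          linarith
        have hest := kernel_est T (x.2 0) hT.le
        have hKest : ‖K (x.2 0) - ((2*T:ℝ):ℂ)‖ ≤ ρ^2*T^3 := by
          have h9 : ‖K (x.2 0) - ((2*T:ℝ):ℂ)‖ ≤ (x.2 0)^2 * T^3 := by simpa [hK] using hest
          have hy2 : (x.2 0)^2 ≤ ρ^2 := by nlinarith [sq_abs (x.2 0), abs_nonneg (x.2 0)]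
          have := mul_le_mul_of_nonneg_right hy2 (le_of_lt (pow_pos hT 3))
          linarith
        exact mul_le_mul_of_nonneg_left hKest (hu0 x)
    refine le_trans (integral_mono hsubint.norm (hint.mul_const _) hptb) ?_
    rw [integral_mul_const, hmass, one_mul]
  have hsqrt : (5/2 : ℝ) ≤ Real.sqrt (2*π) := by
    nlinarith [Real.sq_sqrt h2π.le, Real.sqrt_nonneg (2*π), Real.pi_gt_d6]
  have hFbd : ∀ s, ‖Fst u t s‖ ≤ 1 := Fst_norm_le hu0 hint hmass t
  have hIcc_norm_int : IntegrableOn (fun s => ‖Fst u t s‖) (Set.Icc (-T) T) := by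
    refine Integrable.mono' (g := fun _ : ℝ => (1:ℝ))
      (integrableOn_const measure_Icc_lt_top.ne)
      ((Fst_meas hu t).norm.aestronglyMeasurable) ?_
    exact Filter.Eventually.of_forall fun s => by rw [norm_norm]; exact hFbd s
  have hIcc_sq_int : IntegrableOn (fun s => ‖Fst u t s‖^2) (Set.Icc (-T) T) := by
    refine Integrable.mono' (g := fun _ : ℝ => (1:ℝ))
      (integrableOn_const measure_Icc_lt_top.ne)
      (((Fst_meas hu t).measurable.norm.pow_const 2).aestronglyMeasurable) ?_
    refine Filter.Eventually.of_forall fun s => ?_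
    rw [Real.norm_eq_abs, abs_of_nonneg (by positivity)]
    show ‖Fst u t s‖ ^ 2 ≤ 1
    nlinarith [hFbd s, norm_nonneg (Fst u t s)]
  have hFint : IntegrableOn (Fst u t) (Set.Icc (-T) T) := by
    refine Integrable.mono' (g := fun _ : ℝ => (1:ℝ))
      (integrableOn_const measure_Icc_lt_top.ne)
      (Fst_meas hu t).aestronglyMeasurable ?_
    exact Filter.Eventually.of_forall hFbd
  have h4Ta : 4*T*a ≤ ∫ s in Set.Icc (-T) T, ‖Fst u t s‖ := by
    have h1 : ‖((2*T:ℝ):ℂ) * Fst u t 0‖ = 2*T*(Real.sqrt (2*π)*a) := by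
      rw [norm_mul, Complex.norm_real, Real.norm_eq_abs, abs_of_nonneg (by linarith : (0:ℝ) ≤ 2*T),
        hF0]
    have h2 : ‖((2*T:ℝ):ℂ) * Fst u t 0‖
        ≤ ‖∫ s in Set.Icc (-T) T, Fst u t s‖ + ρ^2*T^3 := by
      calc ‖((2*T:ℝ):ℂ) * Fst u t 0‖
          = ‖(∫ s in Set.Icc (-T) T, Fst u t s) -
              ((∫ s in Set.Icc (-T) T, Fst u t s) - ((2*T:ℝ):ℂ) * Fst u t 0)‖ := by
            rw [_root_.sub_sub_cancel]
        _ ≤ ‖∫ s in Set.Icc (-T) T, Fst u t s‖ +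
              ‖(∫ s in Set.Icc (-T) T, Fst u t s) - ((2*T:ℝ):ℂ) * Fst u t 0‖ := norm_sub_le _ _
        _ ≤ ‖∫ s in Set.Icc (-T) T, Fst u t s‖ + ρ^2*T^3 := by linarith [hdiff]
    have h5 : ρ^2*T^3 ≤ T*a/4 := by nlinarith
    have h55 : 5*(T*a) ≤ 2*T*(Real.sqrt (2*π)*a) := by nlinarith [mul_pos hT hapos]
    have h6 : 4*T*a ≤ ‖∫ s in Set.Icc (-T) T, Fst u t s‖ := by
      rw [h1] at h2
      nlinarith [mul_pos hT hapos]
    exact le_trans h6 (norm_integral_le_integral_norm _)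
  have hconst_int : IntegrableOn (fun _ : ℝ => a) (Set.Icc (-T) T) :=
    integrableOn_const measure_Icc_lt_top.ne
  have hptAM : ∀ s : ℝ, ‖Fst u t s‖ ≤ a + ‖Fst u t s‖^2/(4*a) := by
    intro s
    rw [← sub_le_iff_le_add', le_div_iff₀ (by positivity : (0:ℝ) < 4*a)]
    nlinarith [sq_nonneg (‖Fst u t s‖ - 2*a)]
  have hAM : (∫ s in Set.Icc (-T) T, ‖Fst u t s‖)
      ≤ 2*T*a + (∫ s in Set.Icc (-T) T, ‖Fst u t s‖^2)/(4*a) := by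
    have h1 : (∫ s in Set.Icc (-T) T, ‖Fst u t s‖)
        ≤ ∫ s in Set.Icc (-T) T, (a + ‖Fst u t s‖^2/(4*a)) :=
      integral_mono hIcc_norm_int (hconst_int.add (hIcc_sq_int.div_const _)) hptAM
    rw [integral_add hconst_int (hIcc_sq_int.div_const _), setIntegral_const, smul_eq_mul,
      Real.volume_real_Icc, max_eq_left (by linarith : (0:ℝ) ≤ T - -T),
      integral_div] at h1
    linarith
  have h7 : 2*T*a ≤ (∫ s in Set.Icc (-T) T, ‖Fst u t s‖^2)/(4*a) := by linarith
  rw [le_div_iff₀ (by positivity : (0:ℝ) < 4*a)] at h7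
  nlinarith [h7]

end St16

/-- low-frequency L^{5/2} bound in dimension 2 (m = 1):
    ∫_{{η|Â|^{1/2} ≤ ε|ξ₁|}} |Â(ξ₁)|^{5/2} dξ₁ ≤ C(η)·ε·N_ε^{(2)}[u]. -/
theorem statement16 (η : ℝ) (hη : 0 < η) :
    ∃ C : ℝ, 0 < C ∧ ∀ (ρ ε : ℝ), 2 < ρ → ε ∈ Set.Ioo (0:ℝ) 1 → η < 1/(2*ρ) →
      ∀ u : Spc 1 → ℝ, Measurable u → (∀ x, u x = 0 ∨ u x = 1) → (∫ x : Spc 1, u x) = 1 →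
        Function.support u ⊆ {x : Spc 1 | ‖x.2‖ < ρ} →
        (∫⁻ ξ₁ in {ξ₁ : ℝ | η * Real.sqrt ‖ft1 (crossA u) ξ₁‖ ≤ ε * |ξ₁|},
            ENNReal.ofReal (‖ft1 (crossA u) ξ₁‖ ^ ((5:ℝ)/2)))
          ≤ ENNReal.ofReal (C * ε) * Nen 1 ε u := by
  have hπ : (0:ℝ) < π := Real.pi_pos
  refine ⟨π^2/η, by positivity, ?_⟩
  intro ρ ε hρ hε hsm u hmeas h01 hmass hsupp
  obtain ⟨hε0, hε1⟩ := hε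
  have hρ0 : (0:ℝ) < ρ := by linarith
  have hu0 : ∀ x, 0 ≤ u x := fun x => by rcases h01 x with h|h <;> simp [h]
  have hint : Integrable u := by
    by_contra hcon
    rw [MeasureTheory.integral_undef hcon] at hmass
    norm_num at hmass
  have hηρ : η * ρ ≤ 1/2 := by
    rw [lt_div_iff₀ (by linarith : (0:ℝ) < 2*ρ)] at hsm
    nlinarith
  set a : ℝ → ℝ := fun t => ‖ft1 (crossA u) t‖ with haf
  have ha_meas : Measurable a := St16.a_meas hmeas hint
  have ha0 : ∀ t, 0 ≤ a t := fun t => norm_nonneg _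
  have hft_meas : Measurable (ft u) := St16.ft_meas hmeas
  set Ω : Set (Spc 1) := {ξ : Spc 1 | ((η * Real.sqrt (a ξ.1) ≤ ε * |ξ.1| ∧ 0 < a ξ.1) ∧
    ‖ξ.2‖ ≤ η * Real.sqrt (a ξ.1))} with hΩ
  have hsqa_meas : Measurable fun t : ℝ => η * Real.sqrt (a t) :=
    measurable_const.mul (Real.continuous_sqrt.measurable.comp ha_meas)
  have hΩ_meas : MeasurableSet Ω := by
    rw [hΩ]
    simp only [Set.setOf_and]
    refine MeasurableSet.inter (MeasurableSet.inter ?_ ?_) ?_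
    · exact measurableSet_le (hsqa_meas.comp measurable_fst)
        (measurable_const.mul (measurable_abs.comp measurable_fst))
    · exact measurableSet_lt measurable_const (ha_meas.comp measurable_fst)
    · exact measurableSet_le (measurable_norm.comp measurable_snd)
        (hsqa_meas.comp measurable_fst)
  set V : Spc 1 → ℝ≥0∞ :=
    Ω.indicator (fun ξ => ENNReal.ofReal ((2*ε)⁻¹ * ‖ft u ξ‖^2)) with hV
  have hV_meas : Measurable V :=
    ((measurable_const.mul (hft_meas.norm.pow_const 2)).ennreal_ofReal).indicator hΩ_meas
  have hgam : gam (1+1) ε = ε := by norm_num [gam]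
  have hVN : ∀ ξ : Spc 1, V ξ ≤
      ENNReal.ofReal (gam (1+1) ε * (ξ.1^2 / (ε^2 * ξ.1^2 + ‖ξ.2‖^2)) * ‖ft u ξ‖^2) := by
    intro ξ
    rw [hV]
    by_cases hmem : ξ ∈ Ω
    · rw [Set.indicator_of_mem hmem]
      apply ENNReal.ofReal_le_ofReal
      obtain ⟨⟨h1, h2⟩, h3⟩ := hmem
      have hsp : 0 < Real.sqrt (a ξ.1) := Real.sqrt_pos.mpr h2
      have hξ1 : 0 < |ξ.1| := by nlinarith [abs_nonneg ξ.1]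
      have hξsq : 0 < ξ.1^2 := by nlinarith [sq_abs ξ.1]
      have h4 : ‖ξ.2‖ ≤ ε*|ξ.1| := le_trans h3 h1
      have hsq : ‖ξ.2‖^2 ≤ ε^2*ξ.1^2 := by nlinarith [norm_nonneg ξ.2, sq_abs ξ.1]
      have hden : 0 < ε^2*ξ.1^2 + ‖ξ.2‖^2 := by positivity
      have hkey : (2*ε)⁻¹ ≤ gam (1+1) ε * (ξ.1^2 / (ε^2*ξ.1^2 + ‖ξ.2‖^2)) := by
        rw [hgam, mul_div_assoc', le_div_iff₀ hden]
        rw [inv_mul_le_iff₀ (by positivity : (0:ℝ) < 2*ε)]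
        nlinarith
      exact mul_le_mul_of_nonneg_right hkey (by positivity)
    · rw [Set.indicator_of_notMem hmem]
      exact zero_le
  have hInner_meas : Measurable fun t : ℝ => ∫⁻ y : EuclideanSpace ℝ (Fin 1), V (t, y) :=
    hV_meas.lintegral_prod_right'
  have hTon : (∫⁻ ξ : Spc 1, V ξ) = ∫⁻ t : ℝ, ∫⁻ y : EuclideanSpace ℝ (Fin 1), V (t, y) := by
    rw [MeasureTheory.Measure.volume_eq_prod, MeasureTheory.lintegral_prod _ hV_meas.aemeasurable]
  have hp : MeasurePreserving (fun y : EuclideanSpace ℝ (Fin 1) => y 0) volume volume := by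
    have h3 := (MeasureTheory.volume_preserving_funUnique (Fin 1) ℝ).comp
      (EuclideanSpace.volume_preserving_symm_measurableEquiv_toLp (Fin 1))
    convert h3 using 1
    all_goals rfl
  have hslice : ∀ t : ℝ, (η * Real.sqrt (a t) ≤ ε * |t| ∧ 0 < a t) →
      ENNReal.ofReal (a t ^ ((5:ℝ)/2)) ≤
        ENNReal.ofReal (π^2/η * ε) * ∫⁻ y : EuclideanSpace ℝ (Fin 1), V (t, y) := by
    intro t ⟨ht1, ht2⟩
    set T : ℝ := η * Real.sqrt (a t) with hTdef
    have hsqrtpos : 0 < Real.sqrt (a t) := Real.sqrt_pos.mpr ht2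
    have hT : 0 < T := by positivity
    have hTa : T^2*ρ^2 ≤ a t / 4 := by
      have hTT : T^2 = η^2 * a t := by
        rw [hTdef, mul_pow, Real.sq_sqrt (ha0 t)]
      rw [hTT]
      have h6 : (η*ρ)^2 ≤ (1/2)^2 := by nlinarith [mul_pos hη hρ0]
      nlinarith [mul_le_mul_of_nonneg_right h6 (le_of_lt ht2)]
    have core := St16.slice_sq_lb hmeas hu0 hint hmass hρ0 hsupp t T hT hTa
    set c₃ : ℝ := (2*ε)⁻¹ * ((2*π)⁻¹)^2 with hc₃
    have hc₃0 : 0 ≤ c₃ := by positivity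
    set G : ℝ → ℝ≥0∞ := (Set.Icc (-T) T).indicator
        (fun s => ENNReal.ofReal (c₃ * ‖St16.Fst u t s‖^2)) with hGdef
    have hGpt : ∀ y : EuclideanSpace ℝ (Fin 1), V (t, y) = G (y 0) := by
      intro y
      have hft := St16.ft_eq (u := u) t y
      have hnorm : (2*ε)⁻¹ * ‖ft u (t,y)‖^2 = c₃ * ‖St16.Fst u t (y 0)‖^2 := by
        rw [hft, norm_mul, Complex.norm_real, Real.norm_eq_abs,
          abs_of_nonneg (by positivity : (0:ℝ) ≤ (2*π)⁻¹), mul_pow, hc₃]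
        ring
      by_cases hy : y 0 ∈ Set.Icc (-T) T
      · have hmemy : (t, y) ∈ Ω := by
          refine ⟨⟨ht1, ht2⟩, ?_⟩
          rw [St16.eucl_norm]
          rw [Set.mem_Icc] at hy
          rw [abs_le]
          exact hy
        rw [hV, Set.indicator_of_mem hmemy, hGdef, Set.indicator_of_mem hy, hnorm]
      · have hnmem : (t,y) ∉ Ω := by
          intro hmem2
          refine hy ?_
          have h5 := hmem2.2
          rw [St16.eucl_norm] at h5
          rw [Set.mem_Icc, ← abs_le]
          exact h5
        rw [hV, Set.indicator_of_notMem hnmem, hGdef, Set.indicator_of_notMem hy]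
    have hG_meas : Measurable G := by
      refine Measurable.indicator ?_ measurableSet_Icc
      exact (((St16.Fst_meas hmeas t).measurable.norm.pow_const 2).const_mul _).ennreal_ofReal
    have htrans : (∫⁻ y : EuclideanSpace ℝ (Fin 1), V (t,y)) = ∫⁻ s : ℝ, G s := by
      rw [lintegral_congr hGpt]
      exact hp.lintegral_comp hG_meas
    have hsq_int : IntegrableOn (fun s => c₃ * ‖St16.Fst u t s‖^2) (Set.Icc (-T) T) := by
      refine Integrable.mono' (g := fun _ : ℝ => c₃)
        (integrableOn_const measure_Icc_lt_top.ne)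
        ((((St16.Fst_meas hmeas t).measurable.norm.pow_const 2).const_mul _).aestronglyMeasurable) ?_
      refine Filter.Eventually.of_forall fun s => ?_
      rw [Real.norm_eq_abs, abs_of_nonneg (by positivity)]
      show c₃ * ‖St16.Fst u t s‖^2 ≤ c₃
      have h9 : ‖St16.Fst u t s‖^2 ≤ 1 := by
        nlinarith [St16.Fst_norm_le hu0 hint hmass t s, norm_nonneg (St16.Fst u t s)]
      calc c₃ * ‖St16.Fst u t s‖^2 ≤ c₃ * 1 := mul_le_mul_of_nonneg_left h9 hc₃0
        _ = c₃ := mul_one _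
    have hof : (∫⁻ s : ℝ, G s)
        = ENNReal.ofReal (∫ s in Set.Icc (-T) T, c₃ * ‖St16.Fst u t s‖^2) := by
      rw [hGdef, lintegral_indicator measurableSet_Icc]
      exact (MeasureTheory.ofReal_integral_eq_lintegral_ofReal hsq_int
        (Filter.Eventually.of_forall fun s => by positivity)).symm
    have hval : η * (a t)^((5:ℝ)/2) / (π^2*ε) ≤ ∫ s in Set.Icc (-T) T, c₃ * ‖St16.Fst u t s‖^2 := by
      rw [MeasureTheory.integral_const_mul]
      have heq : η * (a t)^((5:ℝ)/2) / (π^2*ε) = c₃ * (8*T*(a t)^2) := by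
        have hpow : Real.sqrt (a t) * (a t)^2 = (a t)^((5:ℝ)/2) := by
          rw [Real.sqrt_eq_rpow, ← Real.rpow_natCast (a t) 2, ← Real.rpow_add ht2]
          norm_num
        rw [← hpow, hTdef, hc₃]
        field_simp
        ring
      rw [heq]
      exact mul_le_mul_of_nonneg_left core hc₃0
    have hlow : ENNReal.ofReal (η * (a t)^((5:ℝ)/2) / (π^2*ε))
        ≤ ∫⁻ y : EuclideanSpace ℝ (Fin 1), V (t,y) := by
      rw [htrans, hof]
      exact ENNReal.ofReal_le_ofReal hval
    calc ENNReal.ofReal (a t ^ ((5:ℝ)/2))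
        = ENNReal.ofReal (π^2/η * ε) * ENNReal.ofReal (η * (a t)^((5:ℝ)/2) / (π^2*ε)) := by
          rw [← ENNReal.ofReal_mul (by positivity)]
          congr 1
          field_simp
      _ ≤ ENNReal.ofReal (π^2/η * ε) * ∫⁻ y : EuclideanSpace ℝ (Fin 1), V (t,y) :=
          mul_le_mul_right hlow _
  calc (∫⁻ t in {t : ℝ | η * Real.sqrt (a t) ≤ ε * |t|}, ENNReal.ofReal (a t ^ ((5:ℝ)/2)))
      ≤ ∫⁻ t in {t : ℝ | η * Real.sqrt (a t) ≤ ε * |t|},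
          ENNReal.ofReal (π^2/η * ε) * (∫⁻ y : EuclideanSpace ℝ (Fin 1), V (t, y)) := by
        refine setLIntegral_mono (measurable_const.mul hInner_meas) ?_
        intro t ht
        rcases lt_or_eq_of_le (ha0 t) with h2 | h2
        · exact hslice t ⟨ht, h2⟩
        · rw [← h2, Real.zero_rpow (by norm_num : ((5:ℝ)/2) ≠ 0)]
          simp
    _ ≤ ∫⁻ t : ℝ, ENNReal.ofReal (π^2/η * ε) * (∫⁻ y : EuclideanSpace ℝ (Fin 1), V (t, y)) :=
        setLIntegral_le_lintegral _ _
    _ = ENNReal.ofReal (π^2/η * ε) * ∫⁻ t : ℝ, (∫⁻ y : EuclideanSpace ℝ (Fin 1), V (t, y)) :=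
        lintegral_const_mul _ hInner_meas
    _ = ENNReal.ofReal (π^2/η * ε) * ∫⁻ ξ : Spc 1, V ξ := by rw [hTon]
    _ ≤ ENNReal.ofReal (π^2/η * ε) * Nen 1 ε u := by
        refine mul_le_mul_right ?_ _
        exact lintegral_mono hVN
end
end

section
/- Let (f_n) be a sequence in L^∞(ℝ) with sup_n ‖f_n‖_{L^∞} < ∞ and f_n → f pointwise almost everywhere for some f ∈ L^∞(ℝ), and let (g_n) be a sequence in L²(ℝ) converging weakly in L²(ℝ) to some g ∈ L²(ℝ). Then the products f_n·g_n converge weakly in L²(ℝ) to f·g. -/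
open MeasureTheory Real Filter Topology ENNReal

/-- if f_n is uniformly bounded in L^∞(ℝ) and converges a.e. to f ∈ L^∞(ℝ),
    and g_n ⇀ g weakly in L²(ℝ), then f_n·g_n ⇀ f·g weakly in L²(ℝ). -/
theorem statement17 (f g : ℕ → ℝ → ℝ) (flim glim : ℝ → ℝ)
    (hfmem : ∀ n, MemLp (f n) ⊤ volume)
    (hbd : ∃ M : ℝ, ∀ n, ∀ᵐ x : ℝ ∂volume, |f n x| ≤ M)
    (hae : ∀ᵐ x : ℝ ∂volume, Tendsto (fun n => f n x) atTop (𝓝 (flim x)))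
    (hflim : MemLp flim ⊤ volume)
    (hgmem : ∀ n, MemLp (g n) 2 volume) (hglim : MemLp glim 2 volume)
    (hweak : ∀ φ : ℝ → ℝ, MemLp φ 2 volume →
      Tendsto (fun n => ∫ x : ℝ, φ x * g n x) atTop (𝓝 (∫ x : ℝ, φ x * glim x))) :
    ∀ φ : ℝ → ℝ, MemLp φ 2 volume →
      Tendsto (fun n => ∫ x : ℝ, φ x * (f n x * g n x)) atTop
        (𝓝 (∫ x : ℝ, φ x * (flim x * glim x))) := by
  intro φ hφ
  obtain ⟨M₀, hM₀⟩ := hbd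
  set M : ℝ := max M₀ 0 with hMdef
  have hMnn : 0 ≤ M := le_max_right _ _
  have hM : ∀ n, ∀ᵐ x : ℝ ∂volume, |f n x| ≤ M := fun n =>
    (hM₀ n).mono fun x h => h.trans (le_max_left _ _)
  -- uniform boundedness of ‖g n‖₂ via Banach-Steinhaus
  set G : ℕ → Lp ℝ 2 (volume : Measure ℝ) := fun n => (hgmem n).toLp (g n) with hGdef
  set T : ℕ → (Lp ℝ 2 (volume : Measure ℝ) →L[ℝ] ℝ) := fun n => innerSL ℝ (G n) with hTdef
  have hT_apply : ∀ n (ψ : Lp ℝ 2 (volume : Measure ℝ)),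
      T n ψ = ∫ x : ℝ, (ψ : ℝ → ℝ) x * g n x := by
    intro n ψ
    have h1 : T n ψ = ∫ x : ℝ, (G n : ℝ → ℝ) x * (ψ : ℝ → ℝ) x := by
      simp only [hTdef, innerSL_apply_apply]
      rw [MeasureTheory.L2.inner_def]
      simp [RCLike.inner_apply, starRingEnd_apply]
      exact integral_congr_ae (Eventually.of_forall fun x => mul_comm _ _)
    rw [h1]
    refine integral_congr_ae ?_
    filter_upwards [(hgmem n).coeFn_toLp] with x hx
    rw [hx, mul_comm]
  obtain ⟨C, hC⟩ : ∃ C, ∀ n, ‖T n‖ ≤ C := by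
    apply banach_steinhaus
    intro ψ
    have ht := (hweak (ψ : ℝ → ℝ) (Lp.memLp ψ)).abs
    obtain ⟨C, hC⟩ := ht.bddAbove_range
    refine ⟨C, fun n => ?_⟩
    have := hC ⟨n, rfl⟩
    simpa [hT_apply n ψ, Real.norm_eq_abs] using this
  have hGC : ∀ n, ‖G n‖ ≤ C := fun n => by
    have := hC n
    rwa [hTdef, innerSL_apply_norm] at this
  -- the h sequence
  set h : ℕ → ℝ → ℝ := fun n x => φ x * (f n x - flim x) with hhdef
  have hhmem : ∀ n, MemLp (h n) 2 volume := fun n =>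
    ((hfmem n).sub hflim).smul hφ
  -- a.e. bound on flim
  have hflim_bd : ∀ᵐ x : ℝ ∂volume, |flim x| ≤ M := by
    filter_upwards [ae_all_iff.mpr hM, hae] with x hx hlim
    exact le_of_tendsto' hlim.abs fun n => hx n
  -- L² norm of h n tends to 0
  have hsn : Tendsto (fun n => eLpNorm (h n) 2 volume) atTop (𝓝 0) := by
    have hL : Tendsto (fun n => ∫⁻ x : ℝ, (‖h n x‖₊ : ℝ≥0∞) ^ (2:ℝ)) atTop (𝓝 0) := by
      have h0 : (0:ℝ≥0∞) = ∫⁻ _ : ℝ, (0:ℝ≥0∞) := by simp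
      rw [h0]
      have meas : ∀ (u : ℝ → ℝ), AEStronglyMeasurable u volume →
          AEMeasurable (fun x => (‖u x‖₊ : ℝ≥0∞) ^ (2:ℝ)) volume := by
        intro u hu
        have := (ENNReal.continuous_rpow_const (y := (2:ℝ))).measurable.comp_aemeasurable hu.enorm
        simp only [Function.comp_def] at this
        exact this
      refine tendsto_lintegral_of_dominated_convergence'
        (fun x => (ENNReal.ofReal (2*M)) ^ (2:ℝ) * (‖φ x‖₊ : ℝ≥0∞) ^ (2:ℝ))
        (fun n => ?_) (fun n => ?_) ?_ ?_
      · exact meas _ (hhmem n).aestronglyMeasurable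
      · filter_upwards [ae_all_iff.mpr hM, hflim_bd] with x hx hxl
        have habs : |h n x| ≤ (2*M) * |φ x| := by
          rw [hhdef]
          simp only [abs_mul]
          calc |φ x| * |f n x - flim x| ≤ |φ x| * (2*M) := by
                refine mul_le_mul_of_nonneg_left ?_ (abs_nonneg _)
                calc |f n x - flim x| ≤ |f n x| + |flim x| := abs_sub _ _
                  _ ≤ M + M := add_le_add (hx n) hxl
                  _ = 2*M := by ring
            _ = (2*M) * |φ x| := mul_comm _ _
        rw [← ENNReal.mul_rpow_of_nonneg _ _ (by norm_num : (0:ℝ) ≤ 2)]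
        refine ENNReal.rpow_le_rpow ?_ (by norm_num)
        rw [← enorm_eq_nnnorm, ← enorm_eq_nnnorm, Real.enorm_eq_ofReal_abs, Real.enorm_eq_ofReal_abs,
          ← ENNReal.ofReal_mul (by positivity)]
        exact ENNReal.ofReal_le_ofReal habs
      · rw [lintegral_const_mul'' _ (meas _ hφ.aestronglyMeasurable)]
        refine (ENNReal.mul_lt_top (ENNReal.rpow_lt_top_of_nonneg (by norm_num)
          ENNReal.ofReal_ne_top) ?_).ne
        have := lintegral_rpow_enorm_lt_top_of_eLpNorm_lt_top
          (p := (2:ℝ≥0∞)) two_ne_zero ENNReal.ofNat_ne_top hφ.2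
        simp only [ENNReal.toReal_ofNat] at this
        exact this
      · filter_upwards [hae] with x hx
        have hx0 : Tendsto (fun n => h n x) atTop (𝓝 0) := by
          have := (hx.sub_const (flim x)).const_mul (φ x)
          simpa [hhdef] using this
        have cont : Continuous fun y : ℝ => ((‖y‖₊ : ℝ≥0∞)) ^ (2:ℝ) :=
          ENNReal.continuous_rpow_const.comp (ENNReal.continuous_coe.comp continuous_nnnorm)
        have := (cont.tendsto 0).comp hx0
        simpa [ENNReal.zero_rpow_of_pos, Function.comp_def] using this
    have := (ENNReal.continuous_rpow_const (y := (1/2:ℝ))).tendsto 0 |>.comp hL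
    simp only [Function.comp_def] at this ⊢
    have heq : ∀ n, eLpNorm (h n) 2 volume
        = (∫⁻ x : ℝ, (‖h n x‖₊ : ℝ≥0∞) ^ (2:ℝ)) ^ (1/2:ℝ) := by
      intro n
      rw [eLpNorm_eq_lintegral_rpow_enorm_toReal two_ne_zero ENNReal.ofNat_ne_top]
      norm_num
      rfl
    simp only [heq]
    simpa [ENNReal.zero_rpow_of_pos] using this
  -- Lp norms of H n tend to 0
  set H : ℕ → Lp ℝ 2 (volume : Measure ℝ) := fun n => (hhmem n).toLp (h n) with hHdef
  have hnorm : Tendsto (fun n => ‖H n‖) atTop (𝓝 0) := by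
    have := (ENNReal.tendsto_toReal (a := 0) (by simp)).comp hsn
    simp only [Function.comp_def, ENNReal.toReal_zero] at this
    convert this using 2 with n
    exact Lp.norm_toLp _ _
  -- A n
  set A : ℕ → ℝ := fun n => ∫ x : ℝ, h n x * g n x with hAdef
  have hA : Tendsto A atTop (𝓝 0) := by
    have hAin : ∀ n, A n = @inner ℝ _ _ (H n) (G n) := by
      intro n
      rw [MeasureTheory.L2.inner_def]
      refine (integral_congr_ae ?_).symm
      filter_upwards [(hhmem n).coeFn_toLp, (hgmem n).coeFn_toLp] with x hx1 hx2
      simp [RCLike.inner_apply, starRingEnd_apply, hx1, hx2]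
      rw [mul_comm]; exact congrArg₂ _ hx1 hx2
    refine squeeze_zero_norm (a := fun n => ‖H n‖ * C) (fun n => ?_) ?_
    · rw [hAin n, Real.norm_eq_abs]
      calc |@inner ℝ _ _ (H n) (G n)| ≤ ‖H n‖ * ‖G n‖ := abs_real_inner_le_norm _ _
        _ ≤ ‖H n‖ * C := mul_le_mul_of_nonneg_left (hGC n) (norm_nonneg _)
    · simpa using hnorm.mul_const C
  -- B n
  set ψ : ℝ → ℝ := fun x => φ x * flim x with hψdef
  have hψmem : MemLp ψ 2 volume := hflim.smul hφ
  have hB := hweak ψ hψmem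
  -- integrability for splitting
  have hrab : (1:ℝ≥0∞)/1 = 1/2 + 1/2 := by
    rw [one_div_one]; exact (ENNReal.add_halves 1).symm
  have intA : ∀ n, Integrable (fun x => h n x * g n x) volume := fun n =>
    memLp_one_iff_integrable.mp ((hgmem n).smul (hhmem n))
  have intB : ∀ n, Integrable (fun x => ψ x * g n x) volume := fun n =>
    memLp_one_iff_integrable.mp ((hgmem n).smul hψmem)
  have key : ∀ n, (∫ x : ℝ, φ x * (f n x * g n x)) = A n + ∫ x : ℝ, ψ x * g n x := by
    intro n
    rw [hAdef, ← integral_add (intA n) (intB n)]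
    refine integral_congr_ae (Eventually.of_forall fun x => ?_)
    simp only [hhdef, hψdef]; ring
  have hfin : (∫ x : ℝ, φ x * (flim x * glim x)) = 0 + ∫ x : ℝ, ψ x * glim x := by
    rw [zero_add]
    exact integral_congr_ae (Eventually.of_forall fun x => by simp [hψdef, mul_assoc])
  rw [hfin]
  exact Tendsto.congr (fun n => (key n).symm) (hA.add hB)
end

section
/- Strict decrease of the Ḣ^{1/2} double integral under shifting separated bumps together: let τ > 0 and let φ, ψ : ℝ → [0,∞) be measurable, not almost everywhere zero, with ∫∫_{ℝ×ℝ} |h(x) − h(y)|²/|x−y|² dx dy < ∞ for h = φ and h = ψ, with {φ > 0} ⊂ (−∞, 0] and {ψ > 0} ⊂ [τ, ∞). Set A(x) := φ(x) + ψ(x) and, for t ∈ (0, τ], A_t(x) := φ(x) + ψ(x + t). Then ∫∫_{ℝ×ℝ} |A(x) − A(y)|²/|x−y|² dx dy > ∫∫_{ℝ×ℝ} |A_t(x) − A_t(y)|²/|x−y|² dx dy. -/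
open MeasureTheory Real Filter Topology ENNReal

/-- The Ḣ^{1/2}(ℝ) double integral ∫∫ |h(x) - h(y)|²/|x - y|² dx dy, valued in [0,∞]. -/
noncomputable def DInt (h : ℝ → ℝ) : ℝ≥0∞ :=
  ∫⁻ p : ℝ × ℝ, ENNReal.ofReal ((h p.1 - h p.2)^2 / (p.1 - p.2)^2)

namespace S19

/-- pointwise algebraic identity -/
lemma ptwise {a b c d e : ℝ} (he : 0 ≤ e) (ha : 0 ≤ a) (hb : 0 ≤ b) (hc : 0 ≤ c) (hd : 0 ≤ d)
    (hac : a * c = 0) (hbd : b * d = 0) :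
    ENNReal.ofReal (((a + c) - (b + d))^2 / e) + ENNReal.ofReal (2 * (a * d + b * c) / e)
      = ENNReal.ofReal ((a - b)^2 / e) + ENNReal.ofReal ((c - d)^2 / e) := by
  rw [← ENNReal.ofReal_add (div_nonneg (sq_nonneg _) he)
        (div_nonneg (by nlinarith [mul_nonneg ha hd, mul_nonneg hb hc]) he),
      ← ENNReal.ofReal_add (div_nonneg (sq_nonneg _) he) (div_nonneg (sq_nonneg _) he),
      ← add_div, ← add_div]
  congr 1
  have hnum : ((a + c) - (b + d))^2 + 2 * (a * d + b * c) = (a - b)^2 + (c - d)^2 := by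
    linear_combination 2 * hac + 2 * hbd
  rw [hnum]

lemma fst_ne_zero_ae : ∀ᵐ p : ℝ × ℝ, p.1 ≠ 0 := by
  rw [ae_iff]
  have h : {p : ℝ × ℝ | ¬ p.1 ≠ 0} = {(0:ℝ)} ×ˢ (Set.univ : Set ℝ) := by
    ext p; simp [Set.mem_prod, Prod.ext_iff, eq_comm]
  rw [h, Measure.volume_eq_prod, Measure.prod_prod]; simp

lemma snd_ne_zero_ae : ∀ᵐ p : ℝ × ℝ, p.2 ≠ 0 := by
  rw [ae_iff]
  have h : {p : ℝ × ℝ | ¬ p.2 ≠ 0} = (Set.univ : Set ℝ) ×ˢ {(0:ℝ)} := by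
    ext p; simp [Set.mem_prod, Prod.ext_iff, eq_comm]
  rw [h, Measure.volume_eq_prod, Measure.prod_prod]; simp

lemma line_ae (t : ℝ) : ∀ᵐ p : ℝ × ℝ, p.2 ≠ p.1 + t := by
  rw [ae_iff]
  have hs : MeasurableSet {p : ℝ × ℝ | ¬ p.2 ≠ p.1 + t} := by
    simp only [not_ne_iff]
    exact measurableSet_eq_fun measurable_snd (measurable_fst.add_const t)
  rw [Measure.volume_eq_prod, Measure.prod_apply hs]
  have h : ∀ x : ℝ, (Prod.mk x ⁻¹' {p : ℝ × ℝ | ¬ p.2 ≠ p.1 + t}) = {x + t} := by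
    intro x; ext y
    simp [Set.mem_preimage, Set.mem_setOf_eq]
  simp only [h, measure_singleton, lintegral_zero]

lemma pos_meas {φ : ℝ → ℝ} (hφ0 : ∀ x, 0 ≤ φ x)
    (hφne : ¬ φ =ᵐ[volume] (fun _ => (0:ℝ))) : volume {x : ℝ | 0 < φ x} ≠ 0 := by
  intro h
  apply hφne
  rw [Filter.EventuallyEq, ae_iff]
  have he : {x : ℝ | ¬ φ x = (fun _ => (0:ℝ)) x} = {x | 0 < φ x} := by
    ext x
    simp only [Set.mem_setOf_eq]
    constructor
    · intro hne; exact lt_of_le_of_ne (hφ0 x) (Ne.symm hne)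
    · intro hlt; exact ne_of_gt hlt
  rw [he]; exact h

section Main

variable {φ ψ : ℝ → ℝ}

/-- translation invariance of DInt -/
lemma dint_shift (hψm : Measurable ψ) (s : ℝ) :
    DInt (fun x => ψ (x + s)) = DInt ψ := by
  have hT : MeasurePreserving (fun p : ℝ × ℝ => ((s, s) : ℝ × ℝ) + p) volume volume :=
    measurePreserving_add_left volume _
  have hf : Measurable (fun p : ℝ × ℝ => ENNReal.ofReal ((ψ p.1 - ψ p.2)^2 / (p.1 - p.2)^2)) :=
    ((((hψm.comp measurable_fst).sub (hψm.comp measurable_snd)).pow_const 2).div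
      ((measurable_fst.sub measurable_snd).pow_const 2)).ennreal_ofReal
  have h := hT.lintegral_comp hf
  unfold DInt
  rw [← h]
  apply lintegral_congr
  intro p
  show ENNReal.ofReal ((ψ (p.1 + s) - ψ (p.2 + s))^2 / (p.1 - p.2)^2)
      = ENNReal.ofReal ((ψ (s + p.1) - ψ (s + p.2))^2 / ((s + p.1) - (s + p.2))^2)
  rw [add_comm s p.1, add_comm s p.2, show p.1 + s - (p.2 + s) = p.1 - p.2 by ring]

/-- main identity -/
lemma ident (hφm : Measurable φ) (hψm : Measurable ψ)
    (hφ0 : ∀ x, 0 ≤ φ x) (hψ0 : ∀ x, 0 ≤ ψ x) (s : ℝ)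
    (hsupp : ∀ x : ℝ, x ≠ 0 → φ x * ψ (x + s) = 0) :
    DInt (fun x => φ x + ψ (x + s))
      + ∫⁻ p : ℝ × ℝ, ENNReal.ofReal (2 * (φ p.1 * ψ (p.2 + s) + φ p.2 * ψ (p.1 + s)) / (p.1 - p.2)^2)
    = DInt φ + DInt (fun x => ψ (x + s)) := by
  unfold DInt
  have m1 : Measurable (fun p : ℝ × ℝ =>
      ENNReal.ofReal ((φ p.1 + ψ (p.1 + s) - (φ p.2 + ψ (p.2 + s)))^2 / (p.1 - p.2)^2)) :=
    (((((hφm.comp measurable_fst).add (hψm.comp (measurable_fst.add_const s))).sub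
      ((hφm.comp measurable_snd).add (hψm.comp (measurable_snd.add_const s)))).pow_const 2).div
      ((measurable_fst.sub measurable_snd).pow_const 2)).ennreal_ofReal
  have m3 : Measurable (fun p : ℝ × ℝ =>
      ENNReal.ofReal ((φ p.1 - φ p.2)^2 / (p.1 - p.2)^2)) :=
    ((((hφm.comp measurable_fst).sub (hφm.comp measurable_snd)).pow_const 2).div
      ((measurable_fst.sub measurable_snd).pow_const 2)).ennreal_ofReal
  rw [← lintegral_add_left m1, ← lintegral_add_left m3]
  apply lintegral_congr_ae
  filter_upwards [fst_ne_zero_ae, snd_ne_zero_ae] with p h1 h2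
  exact ptwise (sq_nonneg _) (hφ0 p.1) (hφ0 p.2) (hψ0 (p.1 + s)) (hψ0 (p.2 + s))
    (hsupp p.1 h1) (hsupp p.2 h2)

/-- the cross term equals twice the one-sided term, after change of variables -/
lemma cross_eq (hφm : Measurable φ) (hψm : Measurable ψ)
    (hφ0 : ∀ x, 0 ≤ φ x) (hψ0 : ∀ x, 0 ≤ ψ x) (s : ℝ) :
    (∫⁻ p : ℝ × ℝ, ENNReal.ofReal (2 * (φ p.1 * ψ (p.2 + s) + φ p.2 * ψ (p.1 + s)) / (p.1 - p.2)^2))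
    = 2 * ∫⁻ p : ℝ × ℝ, ENNReal.ofReal (2 * (φ p.1 * ψ p.2) / (p.1 - p.2 + s)^2) := by
  have mf1 : Measurable (fun p : ℝ × ℝ =>
      ENNReal.ofReal (2 * (φ p.1 * ψ (p.2 + s)) / (p.1 - p.2)^2)) :=
    ((measurable_const.mul ((hφm.comp measurable_fst).mul
      (hψm.comp (measurable_snd.add_const s)))).div
      ((measurable_fst.sub measurable_snd).pow_const 2)).ennreal_ofReal
  have hsplit : (∫⁻ p : ℝ × ℝ,
      ENNReal.ofReal (2 * (φ p.1 * ψ (p.2 + s) + φ p.2 * ψ (p.1 + s)) / (p.1 - p.2)^2))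
      = (∫⁻ p : ℝ × ℝ, ENNReal.ofReal (2 * (φ p.1 * ψ (p.2 + s)) / (p.1 - p.2)^2))
        + ∫⁻ p : ℝ × ℝ, ENNReal.ofReal (2 * (φ p.2 * ψ (p.1 + s)) / (p.1 - p.2)^2) := by
    rw [← lintegral_add_left mf1]
    apply lintegral_congr
    intro p
    rw [← ENNReal.ofReal_add
        (div_nonneg (by nlinarith [mul_nonneg (hφ0 p.1) (hψ0 (p.2+s))]) (sq_nonneg _))
        (div_nonneg (by nlinarith [mul_nonneg (hφ0 p.2) (hψ0 (p.1+s))]) (sq_nonneg _))]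
    rw [← add_div]
    congr 1
    ring
  have hswapMP : MeasurePreserving (Prod.swap : ℝ × ℝ → ℝ × ℝ) volume volume := by
    rw [Measure.volume_eq_prod]; exact Measure.measurePreserving_swap
  have hswap : (∫⁻ p : ℝ × ℝ, ENNReal.ofReal (2 * (φ p.2 * ψ (p.1 + s)) / (p.1 - p.2)^2))
      = ∫⁻ p : ℝ × ℝ, ENNReal.ofReal (2 * (φ p.1 * ψ (p.2 + s)) / (p.1 - p.2)^2) := by
    rw [← hswapMP.lintegral_comp mf1]
    apply lintegral_congr
    intro p
    show ENNReal.ofReal (2 * (φ p.2 * ψ (p.1 + s)) / (p.1 - p.2)^2)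
        = ENNReal.ofReal (2 * (φ p.2 * ψ (p.1 + s)) / (p.2 - p.1)^2)
    rw [show (p.2 - p.1)^2 = (p.1 - p.2)^2 by ring]
  have hTmp : MeasurePreserving (fun p : ℝ × ℝ => ((0, -s) : ℝ × ℝ) + p) volume volume :=
    measurePreserving_add_left volume _
  have htrans : (∫⁻ p : ℝ × ℝ, ENNReal.ofReal (2 * (φ p.1 * ψ (p.2 + s)) / (p.1 - p.2)^2))
      = ∫⁻ p : ℝ × ℝ, ENNReal.ofReal (2 * (φ p.1 * ψ p.2) / (p.1 - p.2 + s)^2) := by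
    rw [← hTmp.lintegral_comp mf1]
    apply lintegral_congr
    intro p
    show ENNReal.ofReal (2 * (φ (0 + p.1) * ψ (-s + p.2 + s)) / ((0 + p.1) - (-s + p.2))^2)
        = ENNReal.ofReal (2 * (φ p.1 * ψ p.2) / (p.1 - p.2 + s)^2)
    rw [show (0:ℝ) + p.1 = p.1 by ring, show -s + p.2 + s = p.2 by ring,
      show p.1 - (-s + p.2) = p.1 - p.2 + s by ring]
  rw [hsplit, hswap, htrans, two_mul]

end Main

end S19

/-- strict decrease of the Ḣ^{1/2} double integral when two bumps with
    supports separated by distance τ are shifted together by t ∈ (0,τ]. -/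
theorem statement19 (τ : ℝ) (hτ : 0 < τ) (φ ψ : ℝ → ℝ)
    (hφm : Measurable φ) (hψm : Measurable ψ)
    (hφ0 : ∀ x, 0 ≤ φ x) (hψ0 : ∀ x, 0 ≤ ψ x)
    (hφne : ¬ φ =ᵐ[volume] (fun _ => (0:ℝ))) (hψne : ¬ ψ =ᵐ[volume] (fun _ => (0:ℝ)))
    (hφfin : DInt φ < ⊤) (hψfin : DInt ψ < ⊤)
    (hφsupp : {x : ℝ | 0 < φ x} ⊆ Set.Iic 0) (hψsupp : {x : ℝ | 0 < ψ x} ⊆ Set.Ici τ)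
    (t : ℝ) (ht : t ∈ Set.Ioc 0 τ) :
    DInt (fun x => φ x + ψ (x + t)) < DInt (fun x => φ x + ψ x) := by
  obtain ⟨ht0, htτ⟩ := ht
  have hsupp : ∀ s : ℝ, 0 ≤ s → s ≤ τ → ∀ x : ℝ, x ≠ 0 → φ x * ψ (x + s) = 0 := by
    intro s hs0 hsτ x hx
    rcases eq_or_lt_of_le (hφ0 x) with h | h
    · rw [← h, zero_mul]
    rcases eq_or_lt_of_le (hψ0 (x + s)) with h' | h'
    · rw [← h', mul_zero]
    exfalso
    have h1 : x ≤ 0 := hφsupp h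
    have h2 : τ ≤ x + s := hψsupp h'
    exact hx (le_antisymm h1 (by linarith))
  have ident0 := S19.ident hφm hψm hφ0 hψ0 0 (hsupp 0 le_rfl hτ.le)
  have identt := S19.ident hφm hψm hφ0 hψ0 t (hsupp t ht0.le htτ)
  have cross0 := S19.cross_eq hφm hψm hφ0 hψ0 0
  have crosst := S19.cross_eq hφm hψm hφ0 hψ0 t
  have shift0 : DInt (fun x => ψ (x + 0)) = DInt ψ := S19.dint_shift hψm 0
  have shiftt : DInt (fun x => ψ (x + t)) = DInt ψ := S19.dint_shift hψm t
  have hA0 : DInt (fun x => φ x + ψ (x + 0)) = DInt (fun x => φ x + ψ x) := by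
    simp
  rw [cross0, shift0, hA0] at ident0
  rw [crosst, shiftt] at identt
  set J0 : ℝ≥0∞ := ∫⁻ p : ℝ × ℝ,
    ENNReal.ofReal (2 * (φ p.1 * ψ p.2) / (p.1 - p.2 + 0)^2) with hJ0def
  set Jt : ℝ≥0∞ := ∫⁻ p : ℝ × ℝ,
    ENNReal.ofReal (2 * (φ p.1 * ψ p.2) / (p.1 - p.2 + t)^2) with hJtdef
  set A : ℝ≥0∞ := DInt (fun x => φ x + ψ x) with hAdef
  set At : ℝ≥0∞ := DInt (fun x => φ x + ψ (x + t)) with hAtdef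
  set S : ℝ≥0∞ := DInt φ + DInt ψ with hSdef
  -- ident0 : A + 2 * J0 = S ; identt : At + 2 * Jt = S
  have hSfin : S ≠ ⊤ := ENNReal.add_ne_top.2 ⟨hφfin.ne, hψfin.ne⟩
  have hJ0fin : J0 ≠ ⊤ := by
    intro h
    apply hSfin
    rw [← ident0, h]
    simp
  have hJtm : Measurable (fun p : ℝ × ℝ =>
      ENNReal.ofReal (2 * (φ p.1 * ψ p.2) / (p.1 - p.2 + t)^2)) :=
    ((measurable_const.mul ((hφm.comp measurable_fst).mul (hψm.comp measurable_snd))).div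
      (((measurable_fst.sub measurable_snd).add_const t).pow_const 2)).ennreal_ofReal
  -- the core strict pointwise comparison
  have hcore : ∀ p : ℝ × ℝ, p.2 ≠ p.1 + t → 0 < φ p.1 → 0 < ψ p.2 →
      ENNReal.ofReal (2 * (φ p.1 * ψ p.2) / (p.1 - p.2 + 0)^2)
        < ENNReal.ofReal (2 * (φ p.1 * ψ p.2) / (p.1 - p.2 + t)^2) := by
    intro p hp hφp hψp
    have h1 : p.1 ≤ 0 := hφsupp hφp
    have h2 : τ ≤ p.2 := hψsupp hψp
    have hd : τ ≤ p.2 - p.1 := by linarith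
    have hDt : (0:ℝ) < (p.1 - p.2 + t)^2 := by
      have : p.1 - p.2 + t ≠ 0 := fun h => hp (by linarith)
      positivity
    have hlt : (p.1 - p.2 + t)^2 < (p.1 - p.2 + 0)^2 := by nlinarith
    have hnum : (0:ℝ) < 2 * (φ p.1 * ψ p.2) := by positivity
    have := div_lt_div_of_pos_left hnum hDt hlt
    exact (ENNReal.ofReal_lt_ofReal_iff (by positivity)).2 this
  have hzero : ∀ p : ℝ × ℝ, ¬ (0 < φ p.1 ∧ 0 < ψ p.2) → φ p.1 * ψ p.2 = 0 := by
    intro p hnp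
    rcases eq_or_lt_of_le (hφ0 p.1) with h | h
    · rw [← h, zero_mul]
    rcases eq_or_lt_of_le (hψ0 p.2) with h' | h'
    · rw [← h', mul_zero]
    exact absurd ⟨h, h'⟩ hnp
  have key : J0 < Jt := by
    rw [hJ0def, hJtdef]
    apply lintegral_strict_mono_of_ae_le_of_ae_lt_on hJtm.aemeasurable
      (hJ0def ▸ hJ0fin) (s := {p : ℝ × ℝ | 0 < φ p.1 ∧ 0 < ψ p.2})
    · filter_upwards [S19.line_ae t] with p hp
      by_cases hps : 0 < φ p.1 ∧ 0 < ψ p.2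
      · exact (hcore p hp hps.1 hps.2).le
      · rw [hzero p hps]
        simp
    · have hset : {p : ℝ × ℝ | 0 < φ p.1 ∧ 0 < ψ p.2}
          = {x : ℝ | 0 < φ x} ×ˢ {y : ℝ | 0 < ψ y} := by
        ext p; simp [Set.mem_prod, Prod.ext_iff, eq_comm]
      rw [hset, Measure.volume_eq_prod, Measure.prod_prod]
      exact mul_ne_zero (S19.pos_meas hφ0 hφne) (S19.pos_meas hψ0 hψne)
    · filter_upwards [S19.line_ae t] with p hp hps
      exact hcore p hp hps.1 hps.2
  have hAt_le : At ≤ S := by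
    rw [← identt]; exact le_self_add
  have hAtfin : At ≠ ⊤ := (lt_of_le_of_lt hAt_le (lt_top_iff_ne_top.2 hSfin)).ne
  have h2 : 2 * J0 < 2 * Jt :=
    (ENNReal.mul_lt_mul_iff_right (by norm_num) (by norm_num)).2 key
  have hfinal : At + 2 * J0 < A + 2 * J0 := by
    calc At + 2 * J0 < At + 2 * Jt := ENNReal.add_lt_add_left hAtfin h2
    _ = S := identt
    _ = A + 2 * J0 := ident0.symm
  have hK0fin : 2 * J0 ≠ ⊤ := ENNReal.mul_ne_top (by norm_num) hJ0fin
  exact (ENNReal.add_lt_add_iff_right hK0fin).1 hfinal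
end
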